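/- arXiv:1202.3817 — 9 statements merged into one kernel-verified Lean document; each statement's English description precedes it below -/
import Mathlib

section
/- If H is a finite-dimensional complex Hilbert space and U, V are unitary operators on H satisfying V⁻¹U²V = U³, then U V⁻¹ U V = V⁻¹ U V U (i.e., U commutes with V⁻¹UV). -/
open Polynomial

/-! Auxiliary pure lemmas about finite sets of complex numbers `S` with
`S^2 = S^3` (elementwise power images). -/

private lemma img_pow_img_pow (S : Set ℂ) (a b : ℕ) :
    (· ^ b) '' ((· ^ a) '' S) = (· ^ (a * b)) '' S := by
  rw [Set.image_image]
  simp [← pow_mul]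

private lemma img_pow_two_three (S : Set ℂ) (h : (· ^ 2) '' S = (· ^ 3) '' S) (k : ℕ) :
    (· ^ (2 ^ k)) '' S = (· ^ (3 ^ k)) '' S := by
  induction k with
  | zero => simp
  | succ k ih =>
      calc (· ^ (2 ^ (k + 1))) '' S
          = (· ^ 2) '' ((· ^ (2 ^ k)) '' S) := by rw [img_pow_img_pow, ← pow_succ]
        _ = (· ^ 2) '' ((· ^ (3 ^ k)) '' S) := by rw [ih]
        _ = (· ^ (3 ^ k)) '' ((· ^ 2) '' S) := by
              rw [img_pow_img_pow, img_pow_img_pow, mul_comm]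
        _ = (· ^ (3 ^ k)) '' ((· ^ 3) '' S) := by rw [h]
        _ = (· ^ (3 ^ (k + 1))) '' S := by rw [img_pow_img_pow, ← pow_succ']

private lemma aux_core {S : Set ℂ} (h0 : (0 : ℂ) ∉ S) {l μ : ℂ} (hμ : μ ∈ S)
    {k m : ℕ} (hkm : k < m)
    (e1 : μ ^ 3 ^ k = l ^ 2 ^ k) (e2 : μ ^ 3 ^ m = l ^ 2 ^ m) :
    ∃ N, 0 < N ∧ l ^ N = 1 := by
  have hμ0 : μ ≠ 0 := fun hc => h0 (hc ▸ hμ)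
  obtain ⟨d, rfl⟩ : ∃ d, m = k + d := ⟨m - k, by omega⟩
  have hd : d ≠ 0 := by omega
  have key : μ ^ (3 ^ k * 3 ^ d) = μ ^ (3 ^ k * 2 ^ d) := by
    have h1 : l ^ 2 ^ (k + d) = μ ^ (3 ^ k * 2 ^ d) := by
      rw [pow_add, pow_mul, ← e1, ← pow_mul]
    rw [pow_add 3 k d] at e2
    rw [e2, h1]
  have hlt : 3 ^ k * 2 ^ d < 3 ^ k * 3 ^ d := by
    have h23 : 2 ^ d < 3 ^ d := Nat.pow_lt_pow_left (by norm_num) hd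
    have h3k : 0 < 3 ^ k := by positivity
    exact mul_lt_mul_of_pos_left h23 h3k
  set b := 3 ^ k * 2 ^ d with hb
  set c := 3 ^ k * 3 ^ d - b with hc
  have hcpos : 0 < c := by omega
  have hbc : 3 ^ k * 3 ^ d = b + c := by omega
  have hμc : μ ^ c = 1 := by
    have : μ ^ b * μ ^ c = μ ^ b * 1 := by
      rw [← pow_add, mul_one, ← hbc, key]
    exact mul_left_cancel₀ (pow_ne_zero _ hμ0) this
  refine ⟨2 ^ k * c, by positivity, ?_⟩
  calc l ^ (2 ^ k * c) = (l ^ 2 ^ k) ^ c := by rw [pow_mul]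
    _ = (μ ^ 3 ^ k) ^ c := by rw [e1]
    _ = (μ ^ c) ^ 3 ^ k := by rw [← pow_mul, mul_comm, pow_mul]
    _ = 1 := by rw [hμc, one_pow]

private lemma exists_pow_eq_one_of_mem {S : Set ℂ} (hfin : S.Finite) (h0 : (0 : ℂ) ∉ S)
    (h : (· ^ 2) '' S = (· ^ 3) '' S) {l : ℂ} (hl : l ∈ S) :
    ∃ N, 0 < N ∧ l ^ N = 1 := by
  have hch : ∀ k : ℕ, ∃ m, m ∈ S ∧ m ^ 3 ^ k = l ^ 2 ^ k := by
    intro k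
    have : l ^ 2 ^ k ∈ (· ^ (3 ^ k)) '' S := by
      rw [← img_pow_two_three S h k]; exact ⟨l, hl, rfl⟩
    obtain ⟨m, hm, hme⟩ := this
    exact ⟨m, hm, hme⟩
  choose f hfS hfe using hch
  haveI : Finite S := hfin.to_subtype
  obtain ⟨k, m, hne, heq⟩ :=
    Finite.exists_ne_map_eq_of_infinite (fun k : ℕ => (⟨f k, hfS k⟩ : S))
  have heq' : f k = f m := congrArg Subtype.val heq
  rcases hne.lt_or_gt with hkm | hmk
  · exact aux_core h0 (hfS k) hkm (hfe k) (heq' ▸ hfe m)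
  · exact aux_core h0 (hfS m) hmk (hfe m) (heq' ▸ hfe k)

private lemma exists_global_pow {S : Set ℂ} (hfin : S.Finite) (h0 : (0 : ℂ) ∉ S)
    (h : (· ^ 2) '' S = (· ^ 3) '' S) :
    ∃ N, 0 < N ∧ ∀ l ∈ S, l ^ N = 1 := by
  haveI : Fintype S := hfin.fintype
  have hx : ∀ x : S, ∃ N, 0 < N ∧ (x : ℂ) ^ N = 1 := fun x =>
    exists_pow_eq_one_of_mem hfin h0 h x.2
  choose g hg1 hg2 using hx
  refine ⟨∏ x : S, g x, Finset.prod_pos (fun x _ => hg1 x), ?_⟩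
  intro l hl
  obtain ⟨c, hc⟩ : g ⟨l, hl⟩ ∣ ∏ x : S, g x :=
    Finset.dvd_prod_of_mem g (Finset.mem_univ _)
  rw [hc, pow_mul, hg2 ⟨l, hl⟩, one_pow]

private lemma strip_two {S : Set ℂ} (h : (· ^ 2) '' S = (· ^ 3) '' S) (m : ℕ)
    (hm : ∀ l ∈ S, l ^ (2 * m) = 1) : ∀ l ∈ S, l ^ m = 1 := by
  intro l hl
  have hmem : l ^ 3 ∈ (· ^ 2) '' S := by rw [h]; exact ⟨l, hl, rfl⟩
  obtain ⟨μ, hμ, hμe⟩ := hmem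
  have hμe' : μ ^ 2 = l ^ 3 := hμe
  have h3m : l ^ (3 * m) = 1 := by
    calc l ^ (3 * m) = (l ^ 3) ^ m := by rw [pow_mul]
      _ = (μ ^ 2) ^ m := by rw [hμe']
      _ = μ ^ (2 * m) := by rw [pow_mul]
      _ = 1 := hm μ hμ
  calc l ^ m = l ^ m * l ^ (2 * m) := by rw [hm l hl, mul_one]
    _ = l ^ (3 * m) := by rw [← pow_add]; congr 1; omega
    _ = 1 := h3m

private lemma strip_all {S : Set ℂ} (h : (· ^ 2) '' S = (· ^ 3) '' S) :
    ∀ a n, (∀ l ∈ S, l ^ (2 ^ a * n) = 1) → ∀ l ∈ S, l ^ n = 1 := by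
  intro a
  induction a with
  | zero => intro n hn; simpa using hn
  | succ a ih =>
      intro n hn
      refine ih n (strip_two h (2 ^ a * n) ?_)
      intro l hl
      have := hn l hl
      rwa [show 2 ^ (a + 1) * n = 2 * (2 ^ a * n) by ring] at this

private lemma exists_odd_pow {S : Set ℂ} (hfin : S.Finite) (h0 : (0 : ℂ) ∉ S)
    (h : (· ^ 2) '' S = (· ^ 3) '' S) :
    ∃ n, Odd n ∧ 0 < n ∧ ∀ l ∈ S, l ^ n = 1 := by
  obtain ⟨N, hN, hNe⟩ := exists_global_pow hfin h0 h
  obtain ⟨a, n, hn2, rfl⟩ := Nat.exists_eq_pow_mul_and_not_dvd hN.ne' 2 (by norm_num)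
  have hnpos : 0 < n := Nat.pos_of_ne_zero (fun hc => hn2 (hc ▸ dvd_zero 2))
  exact ⟨n, Nat.odd_iff.mpr (Nat.two_dvd_ne_zero.mp hn2), hnpos, strip_all h a n hNe⟩

theorem stmt0 {H : Type*} [NormedAddCommGroup H] [InnerProductSpace ℂ H]
    [FiniteDimensional ℂ H]
    (U V : H →L[ℂ] H) (hU : U ∈ unitary (H →L[ℂ] H)) (hV : V ∈ unitary (H →L[ℂ] H))
    (h : star V * U ^ 2 * V = U ^ 3) :
    U * (star V * U * V) = (star V * U * V) * U := by
  rcases subsingleton_or_nontrivial H with hH | hH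
  · haveI : Subsingleton (H →L[ℂ] H) :=
      ⟨fun a b => ContinuousLinearMap.ext fun x => Subsingleton.elim _ _⟩
    exact Subsingleton.elim _ _
  haveI : CompleteSpace H := FiniteDimensional.complete ℂ H
  haveI : Nontrivial (H →L[ℂ] H) := by
    obtain ⟨x, hx⟩ := exists_ne (0 : H)
    exact ⟨1, 0, fun hc => hx (by simpa using ContinuousLinearMap.ext_iff.mp hc x)⟩
  obtain ⟨hU1, hU2⟩ := Unitary.mem_iff.mp hU
  obtain ⟨hV1, hV2⟩ := Unitary.mem_iff.mp hV
  have hUu : IsUnit U := ⟨⟨U, star U, hU2, hU1⟩, rfl⟩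
  set Sp := spectrum ℂ U with hSp
  -- Sp² = Sp³
  have hconjspec : spectrum ℂ (star V * U ^ 2 * V) = spectrum ℂ (U ^ 2) :=
    Unitary.spectrum_star_left_conjugate (U := ⟨V, hV⟩) (a := U ^ 2)
  have heq : (· ^ 2) '' Sp = (· ^ 3) '' Sp := by
    calc (· ^ 2) '' Sp = spectrum ℂ (U ^ 2) := (spectrum.map_pow U 2).symm
      _ = spectrum ℂ (star V * U ^ 2 * V) := hconjspec.symm
      _ = spectrum ℂ (U ^ 3) := by rw [h]
      _ = (· ^ 3) '' Sp := spectrum.map_pow U 3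
  -- Sp is finite
  haveI : FiniteDimensional ℂ (H →L[ℂ] H) :=
    Module.Finite.equiv (LinearMap.toContinuousLinearMap : (H →ₗ[ℂ] H) ≃ₗ[ℂ] (H →L[ℂ] H))
  have hfin : Sp.Finite := by
    obtain ⟨p, hpm, hp0⟩ := IsIntegral.of_finite ℂ U
    have hp0' : (aeval U) p = 0 := hp0
    refine (p.finite_setOf_isRoot hpm.ne_zero).subset ?_
    intro z hz
    have hmem : eval z p ∈ (fun k => eval k p) '' Sp := ⟨z, hz, rfl⟩
    rw [← spectrum.map_polynomial_aeval U p, hp0', spectrum.zero_eq] at hmem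
    simpa [Polynomial.IsRoot] using hmem
  have h0 : (0 : ℂ) ∉ Sp := spectrum.zero_notMem ℂ hUu
  obtain ⟨n, hodd, hnpos, hroot⟩ := exists_odd_pow hfin h0 heq
  -- U ^ n = 1
  have hcommU : Commute (star U) U := by
    unfold Commute SemiconjBy
    rw [hU1, hU2]
  have c1 : Commute ((star U) ^ n) (U ^ n) := hcommU.pow_pow n n
  haveI : IsStarNormal (U ^ n - 1) := by
    constructor
    rw [star_sub, star_pow, star_one]
    exact (c1.sub_right (Commute.one_right _)).sub_left
      ((Commute.one_left _).sub_right (Commute.one_right _))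
  have hspec : spectrum ℂ (U ^ n - 1) = (fun k => k ^ n - 1) '' Sp := by
    have haev : U ^ n - 1 = aeval U ((X : Polynomial ℂ) ^ n - C 1) := by
      simp [map_sub, aeval_X_pow]
    rw [haev, spectrum.map_polynomial_aeval]
    simp [hSp]

  have hUn : U ^ n = 1 := by
    obtain ⟨z, hz, hzr⟩ := spectrum.exists_nnnorm_eq_spectralRadius (U ^ n - 1)
    have hz0 : z = 0 := by
      rw [hspec] at hz
      obtain ⟨l, hl, hle⟩ := hz
      have hle' : l ^ n - 1 = z := hle
      rw [← hle', hroot l hl, sub_self]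
    have hrad : spectralRadius ℂ (U ^ n - 1) = 0 := by
      rw [← hzr, hz0]; simp
    have hnorm : (‖U ^ n - 1‖₊ : ENNReal) = 0 := by
      rw [← IsStarNormal.spectralRadius_eq_nnnorm (U ^ n - 1), hrad]
    have : U ^ n - 1 = 0 := by
      have := ENNReal.coe_eq_zero.mp hnorm
      simpa [nnnorm_eq_zero] using this
    exact sub_eq_zero.mp this
  -- the conjugated operator W
  set W := star V * U * V with hWdef
  have hconj : ∀ m : ℕ, W ^ m = star V * U ^ m * V := by
    intro m
    induction m with
    | zero => rw [pow_zero, pow_zero, mul_one, hV1]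
    | succ m ih =>
        rw [pow_succ, ih, hWdef, pow_succ]
        calc star V * U ^ m * V * (star V * U * V)
            = star V * U ^ m * (V * star V) * (U * V) := by
              simp only [mul_assoc]
          _ = star V * (U ^ m * U) * V := by
              rw [hV2, mul_one]; simp only [mul_assoc]
  have hW2 : W ^ 2 = U ^ 3 := by rw [hconj 2, h]
  have hWn : W ^ n = 1 := by rw [hconj n, hUn, mul_one, hV1]
  obtain ⟨s, hs⟩ := hodd
  have hWU : W = U ^ (3 * (s + 1)) := by
    calc W = W ^ (n + 1) := by rw [pow_succ, hWn, one_mul]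
      _ = (W ^ 2) ^ (s + 1) := by rw [← pow_mul]; congr 1; omega
      _ = (U ^ 3) ^ (s + 1) := by rw [hW2]
      _ = U ^ (3 * (s + 1)) := by rw [← pow_mul]
  rw [hWU]
  exact (pow_mul_comm' U _).symm
end

section
/- There exist unitary operators U, V on the Hilbert space ℓ²(ℕ × ℤ) and a unit vector ψ such that V⁻¹U²V = U³ but ⟨U V⁻¹ U V ψ, V⁻¹ U V U ψ⟩ = 0; in particular U V⁻¹ U V ≠ V⁻¹ U V U. -/
open scoped InnerProductSpace

section AuxBS

variable {α : Type*}

theorem memlp_comp_aux (e : α ≃ α) (f : lp (fun _ : α => ℂ) 2) :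
    Memℓp (fun i => f (e i)) 2 := by
  have h : Summable fun i => ‖f i‖ ^ (2 : ENNReal).toReal :=
    (lp.memℓp f).summable (by norm_num)
  exact memℓp_gen (e.summable_iff.mpr h)

/-- The permutation of `ℓ²` induced by a permutation of the index set. -/
noncomputable def lpPermCongr (e : α ≃ α) :
    lp (fun _ : α => ℂ) 2 ≃ₗᵢ[ℂ] lp (fun _ : α => ℂ) 2 where
  toFun f := ⟨fun i => f (e.symm i), memlp_comp_aux e.symm f⟩
  invFun f := ⟨fun i => f (e i), memlp_comp_aux e f⟩
  left_inv f := lp.ext (funext fun i => congrArg f (e.symm_apply_apply i))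
  right_inv f := lp.ext (funext fun i => congrArg f (e.apply_symm_apply i))
  map_add' f g := lp.ext (funext fun i => rfl)
  map_smul' c f := lp.ext (funext fun i => rfl)
  norm_map' f := by
    have hp : (0:ℝ) < (2 : ENNReal).toReal := by norm_num
    rw [lp.norm_eq_tsum_rpow hp, lp.norm_eq_tsum_rpow hp]
    congr 1
    exact e.symm.tsum_eq fun i => ‖f i‖ ^ (2 : ENNReal).toReal

theorem lpPermCongr_apply (e : α ≃ α) (f : lp (fun _ : α => ℂ) 2) (i : α) :
    (lpPermCongr e f : ∀ _ : α, ℂ) i = f (e.symm i) := rfl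

theorem lpPermCongr_single [DecidableEq α] (e : α ≃ α) (x : α) (c : ℂ) :
    lpPermCongr e (lp.single 2 x c) = lp.single 2 (e x) c := by
  apply lp.ext
  funext i
  rw [lpPermCongr_apply]
  by_cases h : i = e x
  · subst h
    rw [Equiv.symm_apply_apply, lp.single_apply_self, lp.single_apply_self]
  · rw [lp.single_apply_ne _ _ _ h,
      lp.single_apply_ne _ _ _ (fun hh => h (by rw [← hh, Equiv.apply_symm_apply]))]

theorem lpPermCongr_symm (e : α ≃ α) :
    (lpPermCongr e).symm = lpPermCongr e.symm := rfl

/-- the shift in the `ℤ` coordinate -/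
def eU : ℕ × ℤ ≃ ℕ × ℤ where
  toFun x := (x.1, x.2 + 1)
  invFun x := (x.1, x.2 - 1)
  left_inv x := by simp
  right_inv x := by simp

/-- a bijection `ℕ × ℤ ≃ ℕ × ℤ` conjugating shift-by-3 to shift-by-2 -/
def eV : ℕ × ℤ ≃ ℕ × ℤ where
  toFun x := ((3 * x.1 + (x.2 % 3).toNat) / 2,
    2 * (x.2 / 3) + ((3 * x.1 + (x.2 % 3).toNat) % 2 : ℕ))
  invFun x := ((2 * x.1 + (x.2 % 2).toNat) / 3,
    3 * (x.2 / 2) + ((2 * x.1 + (x.2 % 2).toNat) % 3 : ℕ))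
  left_inv x := by
    obtain ⟨n, k⟩ := x
    simp only [Prod.mk.injEq]
    constructor <;> omega
  right_inv x := by
    obtain ⟨m, k⟩ := x
    simp only [Prod.mk.injEq]
    have h1 : ((3 * (k/2) + ((2 * m + (k % 2).toNat) % 3 : ℕ))) / 3 = k / 2 := by omega
    have h2 : ((3 * (k/2) + ((2 * m + (k % 2).toNat) % 3 : ℕ))) % 3
        = ((2 * m + (k % 2).toNat) % 3 : ℕ) := by omega
    rw [h1, h2]
    constructor <;> omega

theorem eV_conj_rel (i : ℕ × ℤ) :
    eV.symm (((eV i).1, (eV i).2 - 1 - 1)) = (i.1, i.2 - 1 - 1 - 1) := by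
  obtain ⟨n, k⟩ := i
  rw [Equiv.symm_apply_eq]
  simp only [eV, Equiv.coe_fn_mk, Prod.mk.injEq]
  constructor <;> omega

end AuxBS

theorem stmt1 :
    ∃ (U V : lp (fun _ : ℕ × ℤ => ℂ) 2 →L[ℂ] lp (fun _ : ℕ × ℤ => ℂ) 2)
      (ψ : lp (fun _ : ℕ × ℤ => ℂ) 2),
      U ∈ unitary (lp (fun _ : ℕ × ℤ => ℂ) 2 →L[ℂ] lp (fun _ : ℕ × ℤ => ℂ) 2) ∧
      V ∈ unitary (lp (fun _ : ℕ × ℤ => ℂ) 2 →L[ℂ] lp (fun _ : ℕ × ℤ => ℂ) 2) ∧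
      ‖ψ‖ = 1 ∧
      star V * U ^ 2 * V = U ^ 3 ∧
      ⟪(U * (star V * U * V)) ψ, ((star V * U * V) * U) ψ⟫_ℂ = 0 ∧
      U * (star V * U * V) ≠ (star V * U * V) * U := by
  classical
  set H := lp (fun _ : ℕ × ℤ => ℂ) 2 with hH
  let Ue : H ≃ₗᵢ[ℂ] H := lpPermCongr eU
  let Ve : H ≃ₗᵢ[ℂ] H := lpPermCongr eV
  set ψ : H := lp.single 2 ((0 : ℕ), (0 : ℤ)) 1 with hψ
  have hVstar : star (Ve : H →L[ℂ] H) = ((Ve.symm : H ≃ₗᵢ[ℂ] H) : H →L[ℂ] H) :=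
    Ve.star_eq_symm
  have hL : ((Ue : H →L[ℂ] H) * (star (Ve : H →L[ℂ] H) * (Ue : H →L[ℂ] H) * (Ve : H →L[ℂ] H))) ψ
      = lp.single 2 ((0 : ℕ), (2 : ℤ)) 1 := by
    rw [hVstar]
    show Ue (Ve.symm (Ue (Ve ψ))) = _
    rw [hψ]
    rw [show (Ve : H ≃ₗᵢ[ℂ] H) = lpPermCongr eV from rfl,
      show (Ue : H ≃ₗᵢ[ℂ] H) = lpPermCongr eU from rfl,
      lpPermCongr_single, lpPermCongr_single, lpPermCongr_symm, lpPermCongr_single,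
      lpPermCongr_single]
    have hpt : eU (eV.symm (eU (eV ((0 : ℕ), (0 : ℤ))))) = ((0 : ℕ), (2 : ℤ)) := by decide
    rw [hpt]
  have hR : ((star (Ve : H →L[ℂ] H) * (Ue : H →L[ℂ] H) * (Ve : H →L[ℂ] H)) * (Ue : H →L[ℂ] H)) ψ
      = lp.single 2 ((0 : ℕ), (3 : ℤ)) 1 := by
    rw [hVstar]
    show Ve.symm (Ue (Ve (Ue ψ))) = _
    rw [hψ]
    rw [show (Ve : H ≃ₗᵢ[ℂ] H) = lpPermCongr eV from rfl,
      show (Ue : H ≃ₗᵢ[ℂ] H) = lpPermCongr eU from rfl,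
      lpPermCongr_single, lpPermCongr_single, lpPermCongr_single, lpPermCongr_symm,
      lpPermCongr_single]
    have hpt : eV.symm (eU (eV (eU ((0 : ℕ), (0 : ℤ))))) = ((0 : ℕ), (3 : ℤ)) := by decide
    rw [hpt]
  refine ⟨(Ue : H →L[ℂ] H), (Ve : H →L[ℂ] H), ψ, ?_, ?_, ?_, ?_, ?_, ?_⟩
  · exact (Unitary.linearIsometryEquiv.symm Ue).property
  · exact (Unitary.linearIsometryEquiv.symm Ve).property
  · have := lp.norm_single (E := fun _ : ℕ × ℤ => ℂ) (p := 2) (by norm_num)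
      ((0 : ℕ), (0 : ℤ)) (1 : ℂ)
    simpa [hψ] using this
  · rw [hVstar, pow_two, pow_succ, pow_two]
    refine ContinuousLinearMap.ext fun f => lp.ext (funext fun i => ?_)
    exact congrArg f (eV_conj_rel i)
  · rw [hL, hR]
    rw [lp.inner_single_left]
    rw [lp.single_apply_ne]
    · simp
    · decide
  · intro hcomm
    have h1 : (lp.single 2 ((0 : ℕ), (2 : ℤ)) 1 : H) = lp.single 2 ((0 : ℕ), (3 : ℤ)) 1 := by
      rw [← hL, ← hR, hcomm]
    have h2 : (lp.single 2 ((0 : ℕ), (2 : ℤ)) 1 : ∀ _ : ℕ × ℤ, ℂ) ((0 : ℕ), (2 : ℤ))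
        = (lp.single 2 ((0 : ℕ), (3 : ℤ)) 1 : ∀ _ : ℕ × ℤ, ℂ) ((0 : ℕ), (2 : ℤ)) := by rw [h1]
    rw [lp.single_apply_self, lp.single_apply_ne _ _ _ (by decide)] at h2
    exact one_ne_zero h2
end

section
/- Let U be a unitary operator on a d-dimensional Hilbert space and suppose that for every eigenvalue λ₀ ∈ ℝ/ℤ of U (written as e^{2πiλ₀}) there exists an eigenvalue λ₁ of U with 3λ₀ = 2λ₁ in ℝ/ℤ. Then every eigenvalue λ of U satisfies N·λ = 0 in ℝ/ℤ, where N = 3^d · lcm{3¹−2¹, …, 3^d−2^d}. -/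
/-- `N_d = 3^d * lcm {3^1 - 2^1, …, 3^d - 2^d}`. -/
def Npaper (d : ℕ) : ℕ := 3 ^ d * (Finset.Icc 1 d).lcm (fun j => 3 ^ j - 2 ^ j)

lemma exp_two_pi_eq_int {a b : ℝ}
    (h : Complex.exp (2 * Real.pi * Complex.I * a) = Complex.exp (2 * Real.pi * Complex.I * b)) :
    ∃ n : ℤ, a = b + n := by
  rw [Complex.exp_eq_exp_iff_exists_int] at h
  obtain ⟨n, hn⟩ := h
  refine ⟨n, ?_⟩
  have h2 : (2 * (Real.pi : ℂ) * Complex.I) ≠ 0 := by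
    simp [Real.pi_ne_zero, Complex.I_ne_zero]
  have key : (2 * (Real.pi : ℂ) * Complex.I) * a = (2 * (Real.pi : ℂ) * Complex.I) * (b + n) := by
    linear_combination hn
  have := mul_left_cancel₀ h2 key
  exact_mod_cast this

lemma addCircle_eq_iff {x y : ℝ} :
    ((x : ℝ) : AddCircle (1 : ℝ)) = (y : AddCircle (1 : ℝ)) ↔ ∃ n : ℤ, x - y = n := by
  rw [QuotientAddGroup.eq_iff_sub_mem]
  constructor
  · intro hm
    obtain ⟨n, hn⟩ := AddSubgroup.mem_zmultiples_iff.mp hm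
    exact ⟨n, by simpa using hn.symm⟩
  · rintro ⟨n, hn⟩
    exact AddSubgroup.mem_zmultiples_iff.mpr ⟨n, by simp [hn]⟩

theorem stmt4 {H : Type*} [NormedAddCommGroup H] [InnerProductSpace ℂ H]
    [FiniteDimensional ℂ H]
    (d : ℕ) (hd : 1 ≤ d) (hdim : Module.finrank ℂ H = d)
    (U : H →L[ℂ] H) (hU : U ∈ unitary (H →L[ℂ] H))
    (h : ∀ l0 : ℝ,
      Module.End.HasEigenvalue (U : H →ₗ[ℂ] H)
        (Complex.exp (2 * Real.pi * Complex.I * l0)) →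
      ∃ l1 : ℝ,
        Module.End.HasEigenvalue (U : H →ₗ[ℂ] H)
          (Complex.exp (2 * Real.pi * Complex.I * l1)) ∧
        ((3 * l0 : ℝ) : AddCircle (1 : ℝ)) = ((2 * l1 : ℝ) : AddCircle (1 : ℝ))) :
    ∀ l : ℝ,
      Module.End.HasEigenvalue (U : H →ₗ[ℂ] H)
        (Complex.exp (2 * Real.pi * Complex.I * l)) →
      (((Npaper d : ℝ) * l : ℝ) : AddCircle (1 : ℝ)) = 0 := by
  classical
  intro l hl
  set T := (U : H →ₗ[ℂ] H) with hT
  -- the type of eigen-angles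
  let S := {x : ℝ // Module.End.HasEigenvalue T (Complex.exp (2 * Real.pi * Complex.I * x))}
  let f : S → S := fun x => ⟨(h x.1 x.2).choose, (h x.1 x.2).choose_spec.1⟩
  let μ : ℕ → ℝ := fun k => (f^[k] ⟨l, hl⟩).1
  have hμ0 : μ 0 = l := rfl
  have hμP : ∀ k, Module.End.HasEigenvalue T (Complex.exp (2 * Real.pi * Complex.I * (μ k))) :=
    fun k => (f^[k] ⟨l, hl⟩).2
  have hμrel : ∀ k, ∃ n : ℤ, 3 * μ k = 2 * μ (k + 1) + n := by
    intro k
    have hit : f^[k + 1] (⟨l, hl⟩ : S) = f (f^[k] ⟨l, hl⟩) :=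
      Function.iterate_succ_apply' f k _
    have hspec := (h (f^[k] (⟨l, hl⟩ : S)).1 (f^[k] (⟨l, hl⟩ : S)).2).choose_spec.2
    have hμk1 : μ (k + 1) = (h (f^[k] (⟨l, hl⟩ : S)).1 (f^[k] (⟨l, hl⟩ : S)).2).choose := by
      simp only [μ, hit]; rfl
    rw [← hμk1] at hspec
    obtain ⟨n, hn⟩ := addCircle_eq_iff.mp hspec
    exact ⟨n, by linarith⟩
  -- by induction : 2^k μ(i+k) = 3^k μ i + integer
  have hpow : ∀ i k : ℕ, ∃ m : ℤ, (2 : ℝ) ^ k * μ (i + k) = 3 ^ k * μ i + m := by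
    intro i k
    induction k with
    | zero => exact ⟨0, by simp⟩
    | succ k ih =>
      obtain ⟨m, hm⟩ := ih
      obtain ⟨n, hn⟩ := hμrel (i + k)
      refine ⟨3 * m - 2 ^ k * n, ?_⟩
      push_cast
      have hidx : i + (k + 1) = (i + k) + 1 := rfl
      rw [hidx]
      linear_combination 3 * hm - (2 : ℝ) ^ k * hn
  -- pigeonhole: two of μ 0, …, μ d give the same eigenvalue
  have hpig : ∃ i j : Fin (d + 1), i < j ∧
      Complex.exp (2 * Real.pi * Complex.I * (μ i)) =
      Complex.exp (2 * Real.pi * Complex.I * (μ j)) := by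
    by_contra hcon
    push_neg at hcon
    have hinj : Function.Injective
        (fun k : Fin (d + 1) => Complex.exp (2 * Real.pi * Complex.I * (μ k))) := by
      intro a b hab
      rcases lt_trichotomy a b with hlt | heq | hgt
      · exact absurd hab (hcon a b hlt)
      · exact heq
      · exact absurd hab.symm (hcon b a hgt)
    choose v hv using fun k : Fin (d + 1) => (hμP k).exists_hasEigenvector
    have hli := Module.End.eigenvectors_linearIndependent' T _ hinj v hv
    have hcard := hli.fintype_card_le_finrank
    rw [hdim, Fintype.card_fin] at hcard
    omega
  obtain ⟨i, j, hij, hexp⟩ := hpig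
  obtain ⟨n, hn⟩ := exp_two_pi_eq_int hexp.symm
  -- hn : μ j = μ i + n
  set k : ℕ := (j : ℕ) - (i : ℕ) with hk
  have hik : (i : ℕ) + k = (j : ℕ) := by omega
  have hk1 : 1 ≤ k := by
    have := (Fin.lt_iff_val_lt_val.mp hij); omega
  have hkd : k ≤ d := by have := j.isLt; omega
  obtain ⟨m, hm⟩ := hpow (i : ℕ) k
  rw [hik] at hm
  -- (3^k - 2^k) * μ i = 2^k n - m
  have hstep1 : ((3 : ℝ) ^ k - 2 ^ k) * μ (i : ℕ) = 2 ^ k * n - m := by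
    have : μ (j : ℕ) = μ (i : ℕ) + n := hn
    rw [this] at hm
    ring_nf at hm ⊢
    linarith
  obtain ⟨m', hm'⟩ := hpow 0 (i : ℕ)
  rw [Nat.zero_add, hμ0] at hm'
  -- 3^i (3^k - 2^k) l = integer
  have hstep2 : (3 : ℝ) ^ (i : ℕ) * ((3 : ℝ) ^ k - 2 ^ k) * l =
      ((2 ^ (i : ℕ) * (2 ^ k * n - m) - (3 ^ k - 2 ^ k) * m' : ℤ) : ℝ) := by
    push_cast
    linear_combination -((3:ℝ) ^ k - 2 ^ k) * hm' + (2:ℝ) ^ (i : ℕ) * hstep1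
  -- divisibility
  have h23 : (2 : ℕ) ^ k ≤ 3 ^ k := Nat.pow_le_pow_left (by norm_num) k
  have hdvd : (3 ^ (i : ℕ) * (3 ^ k - 2 ^ k) : ℕ) ∣ Npaper d := by
    unfold Npaper
    exact mul_dvd_mul (pow_dvd_pow 3 (by have := j.isLt; omega))
      (Finset.dvd_lcm (Finset.mem_Icc.mpr ⟨hk1, hkd⟩))
  obtain ⟨c, hc⟩ := hdvd
  rw [AddCircle.coe_eq_zero_iff]
  refine ⟨c * (2 ^ (i : ℕ) * (2 ^ k * n - m) - (3 ^ k - 2 ^ k) * m'), ?_⟩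
  have hcast : ((3 ^ (i : ℕ) * (3 ^ k - 2 ^ k) : ℕ) : ℝ) =
      (3 : ℝ) ^ (i : ℕ) * ((3 : ℝ) ^ k - 2 ^ k) := by
    push_cast [Nat.cast_sub h23]
    ring
  have : (Npaper d : ℝ) = ((3 ^ (i : ℕ) * (3 ^ k - 2 ^ k) : ℕ) : ℝ) * (c : ℕ) := by
    rw [hc]; push_cast; ring
  rw [this, hcast]
  rw [zsmul_eq_mul]
  push_cast at hstep2 ⊢
  linear_combination -(c : ℝ) * hstep2
end

section
/- Let A be a finite subset of ℝ/ℤ of cardinality at most d such that for every λ₀ ∈ A there exists λ₁ ∈ A with 3λ₀ = 2λ₁. Then there exist integers k, n with 0 ≤ k, 1 ≤ n, k + n ≤ d, and an element λ ∈ A with 3^k(3^n − 2^n)·λ = 0 in ℝ/ℤ; moreover every element λ₀ ∈ A is torsion of order dividing N_d = 3^d · lcm{3¹−2¹, …, 3^d−2^d}. -/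
lemma stmt5_key (d : ℕ) (A : Finset (AddCircle (1 : ℝ))) (hcard : A.card ≤ d)
    (h : ∀ l0 ∈ A, ∃ l1 ∈ A, (3 : ℤ) • l0 = (2 : ℤ) • l1) :
    ∀ l0 ∈ A, ∃ i n y, 1 ≤ n ∧ i + n ≤ d ∧ y ∈ A ∧
      ((3 : ℤ) ^ i) • l0 = ((2 : ℤ) ^ i) • y ∧ ((3 : ℤ) ^ n - 2 ^ n) • y = 0 := by
  choose! f hfA hfe using h
  have iter : ∀ x ∈ A, ∀ j, f^[j] x ∈ A ∧
      ((3 : ℤ) ^ j) • x = ((2 : ℤ) ^ j) • f^[j] x := by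
    intro x hx j
    induction j with
    | zero => simpa using hx
    | succ j ih =>
      obtain ⟨hmem, heq⟩ := ih
      rw [Function.iterate_succ_apply']
      refine ⟨hfA _ hmem, ?_⟩
      calc ((3 : ℤ) ^ (j + 1)) • x = (3 : ℤ) • (((3 : ℤ) ^ j) • x) := by
            rw [← mul_smul, ← pow_succ']
        _ = (3 : ℤ) • (((2 : ℤ) ^ j) • f^[j] x) := by rw [heq]
        _ = ((2 : ℤ) ^ j) • ((3 : ℤ) • f^[j] x) := smul_comm _ _ _
        _ = ((2 : ℤ) ^ j) • ((2 : ℤ) • f (f^[j] x)) := by rw [hfe _ hmem]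
        _ = ((2 : ℤ) ^ (j + 1)) • f (f^[j] x) := by rw [← mul_smul, ← pow_succ]
  intro l0 hl0
  have hpig : ∃ i ∈ Finset.range (d + 1), ∃ j ∈ Finset.range (d + 1),
      i ≠ j ∧ f^[i] l0 = f^[j] l0 := by
    apply Finset.exists_ne_map_eq_of_card_lt_of_maps_to
    · simpa using Nat.lt_succ_of_le hcard
    · exact fun j _ => (iter l0 hl0 j).1
  obtain ⟨i, hi, j, hj, hne, heq⟩ := hpig
  simp only [Finset.mem_range] at hi hj
  have hab : ∃ a b, a < b ∧ b ≤ d ∧ f^[a] l0 = f^[b] l0 := by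
    rcases Nat.lt_or_gt_of_ne hne with hlt | hlt
    · exact ⟨i, j, hlt, by omega, heq⟩
    · exact ⟨j, i, hlt, by omega, heq.symm⟩
  obtain ⟨a, b, hab, hbd, hEq⟩ := hab
  set y := f^[a] l0 with hy
  set n := b - a with hn
  have hyA : y ∈ A := (iter l0 hl0 a).1
  have hcyc : f^[n] y = y := by
    rw [hy, ← Function.iterate_add_apply]
    have : n + a = b := by omega
    rw [this, ← hEq]
  refine ⟨a, n, y, by omega, by omega, hyA, (iter l0 hl0 a).2, ?_⟩
  have h1 : ((3 : ℤ) ^ n) • y = ((2 : ℤ) ^ n) • y := by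
    have := (iter y hyA n).2
    rwa [hcyc] at this
  rw [sub_smul, h1, sub_self]

theorem stmt5 (d : ℕ) (A : Finset (AddCircle (1 : ℝ))) (hA : A.Nonempty)
    (hcard : A.card ≤ d)
    (h : ∀ l0 ∈ A, ∃ l1 ∈ A, (3 : ℤ) • l0 = (2 : ℤ) • l1) :
    (∃ (k n : ℕ) (l : AddCircle (1 : ℝ)), 1 ≤ n ∧ k + n ≤ d ∧ l ∈ A ∧
      ((3 ^ k * (3 ^ n - 2 ^ n) : ℤ)) • l = 0) ∧
    ∀ l0 ∈ A, (Npaper d : ℤ) • l0 = 0 := by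
  have key := stmt5_key d A hcard h
  constructor
  · obtain ⟨l0, hl0⟩ := hA
    obtain ⟨i, n, y, hn1, hind, hyA, _, hy0⟩ := key l0 hl0
    exact ⟨0, n, y, hn1, by omega, hyA, by simpa using hy0⟩
  · intro l0 hl0
    obtain ⟨i, n, y, hn1, hind, hyA, hiy, hy0⟩ := key l0 hl0
    have hM0 : ((3 : ℤ) ^ i * ((3 : ℤ) ^ n - 2 ^ n)) • l0 = 0 := by
      calc ((3 : ℤ) ^ i * ((3 : ℤ) ^ n - 2 ^ n)) • l0
          = ((3 : ℤ) ^ n - 2 ^ n) • (((3 : ℤ) ^ i) • l0) := by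
            rw [← mul_smul, mul_comm]
        _ = ((3 : ℤ) ^ n - 2 ^ n) • (((2 : ℤ) ^ i) • y) := by rw [hiy]
        _ = ((2 : ℤ) ^ i) • (((3 : ℤ) ^ n - 2 ^ n) • y) := smul_comm _ _ _
        _ = 0 := by rw [hy0, smul_zero]
    have hdvdN : ((3 : ℤ) ^ i * ((3 : ℤ) ^ n - 2 ^ n)) ∣ (Npaper d : ℤ) := by
      have hle : (2 : ℕ) ^ n ≤ 3 ^ n := Nat.pow_le_pow_left (by norm_num) n
      have hnat : (3 ^ i * (3 ^ n - 2 ^ n) : ℕ) ∣ Npaper d := by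
        apply mul_dvd_mul
        · exact pow_dvd_pow 3 (by omega)
        · exact Finset.dvd_lcm (Finset.mem_Icc.2 ⟨hn1, by omega⟩)
      have := Int.natCast_dvd_natCast.2 hnat
      rwa [Nat.cast_mul, Nat.cast_pow, Nat.cast_sub hle, Nat.cast_pow, Nat.cast_pow] at this
    obtain ⟨c, hc⟩ := hdvdN
    rw [hc, mul_comm, mul_smul, hM0, smul_zero]
end

section
/- Let U, W be unitary operators on a finite-dimensional Hilbert space such that W² commutes with U and every eigenvector of W² is an eigenvector of W, and every eigenvector of U² is an eigenvector of U. If moreover W² = U³, then W commutes with U. -/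
private lemma normal_ker_sq' {H : Type*} [NormedAddCommGroup H] [InnerProductSpace ℂ H]
    [FiniteDimensional ℂ H] (N : H →L[ℂ] H)
    (hc : ContinuousLinearMap.adjoint N * N = N * ContinuousLinearMap.adjoint N)
    (x : H) (hx : N (N x) = 0) : N x = 0 := by
  have h1 : ContinuousLinearMap.adjoint N (N x) = 0 := by
    have : (inner ℂ (ContinuousLinearMap.adjoint N (N x)) (ContinuousLinearMap.adjoint N (N x)) : ℂ) = 0 := by
      rw [ContinuousLinearMap.adjoint_inner_left]
      have : N (ContinuousLinearMap.adjoint N (N x)) = ContinuousLinearMap.adjoint N (N (N x)) := by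
        have := congrArg (fun T => T (N x)) hc
        simpa using this.symm
      rw [this, hx, map_zero, inner_zero_right]
    simpa using this
  have : (inner ℂ (N x) (N x) : ℂ) = 0 := by
    rw [← ContinuousLinearMap.adjoint_inner_left, h1]; simp
  simpa using this

private lemma normal_ker_pow' {H : Type*} [NormedAddCommGroup H] [InnerProductSpace ℂ H]
    [FiniteDimensional ℂ H] (N : H →L[ℂ] H)
    (hc : ContinuousLinearMap.adjoint N * N = N * ContinuousLinearMap.adjoint N)
    (k : ℕ) : ∀ x : H, (N ^ k) x = 0 → N x = 0 := by
  induction k with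
  | zero => intro x hx; simp only [pow_zero, ContinuousLinearMap.one_apply] at hx
            rw [hx, map_zero]
  | succ k ih =>
      intro x hx
      rw [pow_succ, ContinuousLinearMap.mul_apply] at hx
      exact normal_ker_sq' N hc x (ih (N x) hx)

theorem stmt8 {H : Type*} [NormedAddCommGroup H] [InnerProductSpace ℂ H]
    [FiniteDimensional ℂ H]
    (U W : H →L[ℂ] H) (hU : U ∈ unitary (H →L[ℂ] H)) (hW : W ∈ unitary (H →L[ℂ] H))
    (hcomm : W ^ 2 * U = U * W ^ 2)
    (hWev : ∀ (ξ : H) (μ : ℂ), ξ ≠ 0 → (W ^ 2) ξ = μ • ξ → ∃ ν : ℂ, W ξ = ν • ξ)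
    (hUev : ∀ (ξ : H) (μ : ℂ), ξ ≠ 0 → (U ^ 2) ξ = μ • ξ → ∃ ν : ℂ, U ξ = ν • ξ)
    (h : W ^ 2 = U ^ 3) :
    W * U = U * W := by
  -- the commutator as a linear map
  set D : H →ₗ[ℂ] H := ((W * U - U * W : H →L[ℂ] H) : H →ₗ[ℂ] H) with hD
  set T : Module.End ℂ H := (U : H →ₗ[ℂ] H) with hT
  -- step 1 : D vanishes on eigenvectors of U
  have step1 : ∀ (μ : ℂ) (x : H), U x = μ • x → D x = 0 := by
    intro μ x hx
    rcases eq_or_ne x 0 with rfl | hx0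
    · simp
    · have hW2 : (W ^ 2) x = (μ ^ 3) • x := by
        rw [h]
        have h2 : (U ^ 2) x = (μ ^ 2) • x := by
          rw [pow_two, pow_two, ContinuousLinearMap.mul_apply, hx, map_smul, hx, smul_smul]
        rw [pow_succ, ContinuousLinearMap.mul_apply, hx, map_smul, h2, smul_smul]
        ring_nf
      obtain ⟨ν, hν⟩ := hWev x (μ ^ 3) hx0 hW2
      have : D x = W (U x) - U (W x) := by
        simp [hD, ContinuousLinearMap.sub_apply, ContinuousLinearMap.mul_apply]
      rw [this, hx, hν, map_smul, map_smul, hν, hx, smul_smul, smul_smul, mul_comm, sub_self]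
  -- step 2 : maximal generalized eigenspaces of U are eigenspaces
  have step2 : ∀ μ : ℂ, (T.maxGenEigenspace μ) ≤ LinearMap.ker D := by
    intro μ x hx
    rw [Module.End.mem_maxGenEigenspace] at hx
    obtain ⟨k, hk⟩ := hx
    set N : H →L[ℂ] H := U - μ • 1 with hN
    have hNc : ContinuousLinearMap.adjoint N * N = N * ContinuousLinearMap.adjoint N := by
      have hstar : star N * N = N * star N := by
        have h1 : star U * U = 1 := hU.1
        have h2 : U * star U = 1 := hU.2
        simp only [hN, star_sub, star_smul, star_one, RCLike.star_def, sub_mul, mul_sub,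
          smul_mul_assoc, mul_smul_comm, one_mul, mul_one, smul_smul, smul_sub, h1, h2]
        rw [mul_comm μ ((starRingEnd ℂ) μ)]
        abel
      rw [← ContinuousLinearMap.star_eq_adjoint]; exact hstar
    have hNT : ∀ y : H, (T - μ • (1 : Module.End ℂ H)) y = N y := by
      intro y
      simp [hT, hN, ContinuousLinearMap.sub_apply, ContinuousLinearMap.smul_apply]
    have hpow : ∀ (k : ℕ) (y : H), ((T - μ • (1 : Module.End ℂ H)) ^ k) y = (N ^ k) y := by
      intro k
      induction k with
      | zero => intro y; simp
      | succ k ih =>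
          intro y
          rw [pow_succ, pow_succ, Module.End.mul_apply, ContinuousLinearMap.mul_apply, hNT, ih]
    rw [hpow] at hk
    have hNx : N x = 0 := normal_ker_pow' N hNc k x hk
    have hUx : U x = μ • x := by
      have := hNx
      rw [hN, ContinuousLinearMap.sub_apply, ContinuousLinearMap.smul_apply,
        ContinuousLinearMap.one_apply, sub_eq_zero] at this
      exact this
    exact LinearMap.mem_ker.mpr (step1 μ x hUx)
  -- step 3 : generalized eigenspaces span
  have htop : (⊤ : Submodule ℂ H) ≤ LinearMap.ker D := by
    rw [← Module.End.iSup_maxGenEigenspace_eq_top T]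
    exact iSup_le step2
  ext x
  have hx : D x = 0 := LinearMap.mem_ker.mp (htop (Submodule.mem_top))
  have : (W * U) x - (U * W) x = 0 := by
    simpa [hD, ContinuousLinearMap.sub_apply] using hx
  rw [ContinuousLinearMap.mul_apply, ContinuousLinearMap.mul_apply] at this
  simpa [ContinuousLinearMap.mul_apply, sub_eq_zero] using this
end

section
/- Every finite-dimensional unitary representation ρ of the group ⟨u, v | v⁻¹u²v = u³⟩ satisfies ρ(u)ρ(v)⁻¹ρ(u)ρ(v) = ρ(v)⁻¹ρ(u)ρ(v)ρ(u). -/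
/-- The single relator `v⁻¹ u² v u⁻³` of the Baumslag–Solitar group `BS(2,3)`,
with `u = of 0` and `v = of 1`. -/
def bsRels : Set (FreeGroup (Fin 2)) :=
  {(FreeGroup.of 1)⁻¹ * (FreeGroup.of 0) ^ 2 * FreeGroup.of 1 * ((FreeGroup.of 0) ^ 3)⁻¹}

private lemma conj_pow_aux {G : Type*} [Group G] (g x : G) (n : ℕ) :
    (g⁻¹ * x * g) ^ n = g⁻¹ * x ^ n * g := by
  induction n with
  | zero => simp
  | succ n ih => rw [pow_succ, ih, pow_succ]; group

private lemma spectrum_finite_clm {H : Type*} [NormedAddCommGroup H] [InnerProductSpace ℂ H]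
    [FiniteDimensional ℂ H] (A : H →L[ℂ] H) : (spectrum ℂ A).Finite := by
  have hsub : spectrum ℂ A ⊆ spectrum ℂ (A : H →ₗ[ℂ] H) := by
    intro z hz
    rw [spectrum.mem_iff] at hz ⊢
    intro hu
    apply hz
    rw [ContinuousLinearMap.isUnit_iff_bijective]
    have hb := (Module.End.isUnit_iff _).mp hu
    have hfun : ⇑(algebraMap ℂ (Module.End ℂ H) z - (A : H →ₗ[ℂ] H)) =
        ⇑(algebraMap ℂ (H →L[ℂ] H) z - A) := by
      funext x
      simp [Algebra.algebraMap_eq_smul_one, Module.algebraMap_end_apply]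
    rwa [hfun] at hb
  exact (Module.End.finite_spectrum _).subset hsub

private lemma exists_odd_elem {S : Set ℂ} (hfin : S.Finite) (h0 : (0 : ℂ) ∉ S)
    (h : ∀ n : ℕ, (· ^ 3 ^ n) '' S ⊆ (· ^ 2 ^ n) '' S) {z : ℂ} (hz : z ∈ S) :
    ∃ e : ℕ, Odd e ∧ z ^ e = 1 := by
  have key : ∀ n : ℕ, ∃ w, w ∈ S ∧ w ^ 2 ^ n = z ^ 3 ^ n := by
    intro n
    obtain ⟨w, hw, hweq⟩ := h n ⟨z, hz, rfl⟩
    exact ⟨w, hw, hweq⟩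
  choose w hw hweq using key
  have : Finite S := hfin.to_subtype
  obtain ⟨n, m, hne, heq⟩ :=
    Finite.exists_ne_map_eq_of_infinite (fun n : ℕ => (⟨w n, hw n⟩ : S))
  have heq' : w n = w m := by simpa [Subtype.ext_iff] using heq
  have main : ∀ p q : ℕ, p < q → w p = w q → ∃ e : ℕ, Odd e ∧ z ^ e = 1 := by
    intro p q hlt hwe
    have hz0 : z ≠ 0 := fun hzz => h0 (hzz ▸ hz)
    have e1 : w p ^ 2 ^ p = z ^ 3 ^ p := hweq p
    have e2 : w p ^ 2 ^ q = z ^ 3 ^ q := by rw [hwe]; exact hweq q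
    set k := q - p with hk
    have hk0 : k ≠ 0 := by omega
    have hq : q = p + k := by omega
    have e3 : z ^ (3 ^ p * 2 ^ k) = z ^ (3 ^ p * 3 ^ k) := by
      have : (w p ^ 2 ^ p) ^ 2 ^ k = w p ^ 2 ^ q := by
        rw [← pow_mul, ← pow_add, hq]
      calc z ^ (3 ^ p * 2 ^ k) = (z ^ 3 ^ p) ^ 2 ^ k := by rw [pow_mul]
        _ = (w p ^ 2 ^ p) ^ 2 ^ k := by rw [e1]
        _ = w p ^ 2 ^ q := this
        _ = z ^ 3 ^ q := e2
        _ = z ^ (3 ^ p * 3 ^ k) := by rw [← pow_add, hq]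
    set s := 3 ^ p * 2 ^ k with hs
    set t := 3 ^ p * 3 ^ k with ht
    have hst : s < t := by
      have h2k : 2 ^ k < 3 ^ k := Nat.pow_lt_pow_left (by norm_num) hk0
      have h3p : 0 < 3 ^ p := Nat.pow_pos (by norm_num)
      exact mul_lt_mul_of_pos_left h2k h3p
    refine ⟨t - s, ?_, ?_⟩
    · have hodd3 : Odd (3 ^ p * 3 ^ k) := Odd.mul (Odd.pow (by decide)) (Odd.pow (by decide))
      have heven : Even s := by
        have : Even (2 ^ k) := (Nat.even_pow).mpr ⟨by norm_num, hk0⟩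
        exact this.mul_left _
      exact Nat.Odd.sub_even (le_of_lt hst) hodd3 heven
    · have hsplit : z ^ s * z ^ (t - s) = z ^ s * 1 := by
        rw [mul_one, ← pow_add]
        rw [Nat.add_sub_cancel' (le_of_lt hst)]
        exact e3.symm
      exact mul_left_cancel₀ (pow_ne_zero s hz0) hsplit
  rcases hne.lt_or_gt with hlt | hlt
  · exact main n m hlt heq'
  · exact main m n hlt heq'.symm

private lemma exists_odd_pow_eq_one {S : Set ℂ} (hfin : S.Finite) (h0 : (0 : ℂ) ∉ S)
    (h : ∀ n : ℕ, (· ^ 3 ^ n) '' S ⊆ (· ^ 2 ^ n) '' S) :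
    ∃ N : ℕ, Odd N ∧ ∀ z ∈ S, z ^ N = 1 := by
  classical
  have key : ∀ z : ℂ, ∃ e : ℕ, Odd e ∧ (z ∈ S → z ^ e = 1) := by
    intro z
    by_cases hz : z ∈ S
    · obtain ⟨e, he, he1⟩ := exists_odd_elem hfin h0 h hz
      exact ⟨e, he, fun _ => he1⟩
    · exact ⟨1, odd_one, fun hzz => absurd hzz hz⟩
  choose e he hp using key
  refine ⟨∏ z ∈ hfin.toFinset, e z, ?_, ?_⟩
  · exact Finset.prod_induction e Odd (fun _ _ => Odd.mul) odd_one fun z _ => he z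
  · intro z hz
    rw [← Finset.mul_prod_erase _ _ (hfin.mem_toFinset.mpr hz), pow_mul, hp z hz, one_pow]

theorem stmt11 {H : Type*} [NormedAddCommGroup H] [InnerProductSpace ℂ H]
    [FiniteDimensional ℂ H]
    (ρ : PresentedGroup bsRels →* unitary (H →L[ℂ] H)) :
    ρ (PresentedGroup.of 0) * (ρ (PresentedGroup.of 1))⁻¹ * ρ (PresentedGroup.of 0) *
        ρ (PresentedGroup.of 1) =
      (ρ (PresentedGroup.of 1))⁻¹ * ρ (PresentedGroup.of 0) * ρ (PresentedGroup.of 1) *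
        ρ (PresentedGroup.of 0) := by
  classical
  set a := ρ (PresentedGroup.of 0) with ha
  set b := ρ (PresentedGroup.of 1) with hb
  -- extract the relation
  have hrel : b⁻¹ * a ^ 2 * b = a ^ 3 := by
    have hmem : ((FreeGroup.of 1)⁻¹ * (FreeGroup.of 0) ^ 2 * FreeGroup.of 1 *
        ((FreeGroup.of 0) ^ 3)⁻¹ : FreeGroup (Fin 2)) ∈ Subgroup.normalClosure bsRels :=
      Subgroup.subset_normalClosure rfl
    have h1 : ρ (PresentedGroup.mk bsRels ((FreeGroup.of 1)⁻¹ * (FreeGroup.of 0) ^ 2 *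
        FreeGroup.of 1 * ((FreeGroup.of 0) ^ 3)⁻¹)) = 1 := by
      rw [show PresentedGroup.mk bsRels ((FreeGroup.of 1)⁻¹ * (FreeGroup.of 0) ^ 2 *
        FreeGroup.of 1 * ((FreeGroup.of 0) ^ 3)⁻¹) = (1 : PresentedGroup bsRels) from
        (QuotientGroup.eq_one_iff _).mpr hmem, map_one]
    simp only [map_mul, map_inv, map_pow] at h1
    have hof : ∀ i : Fin 2, ρ (PresentedGroup.mk bsRels (FreeGroup.of i)) =
        ρ (PresentedGroup.of i) := fun _ => rfl
    rw [hof 0, hof 1, ← ha, ← hb, mul_inv_eq_one] at h1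
    exact h1
  -- iterate the relation
  have hconj : ∀ n : ℕ, (b ^ n)⁻¹ * a ^ 2 ^ n * b ^ n = a ^ 3 ^ n := by
    intro n
    induction n with
    | zero => simp
    | succ n ih =>
      have h2 : b⁻¹ * a ^ 2 ^ (n + 1) * b = (a ^ 3) ^ 2 ^ n := by
        have hx : a ^ 2 ^ (n + 1) = (a ^ 2) ^ 2 ^ n := by
          rw [← pow_mul, ← pow_succ']
        rw [hx, ← conj_pow_aux, hrel]
      calc (b ^ (n + 1))⁻¹ * a ^ 2 ^ (n + 1) * b ^ (n + 1)
          = (b ^ n)⁻¹ * (b⁻¹ * a ^ 2 ^ (n + 1) * b) * b ^ n := by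
            rw [pow_succ, mul_inv_rev]; group
        _ = (b ^ n)⁻¹ * (a ^ 2 ^ n) ^ 3 * b ^ n := by
            rw [h2, ← pow_mul, mul_comm 3 (2^n), pow_mul]
        _ = ((b ^ n)⁻¹ * a ^ 2 ^ n * b ^ n) ^ 3 := by rw [conj_pow_aux]
        _ = (a ^ 3 ^ n) ^ 3 := by rw [ih]
        _ = a ^ 3 ^ (n + 1) := by rw [← pow_mul, ← pow_succ]
  -- pass to the algebra
  set A : H →L[ℂ] H := (a : H →L[ℂ] H) with hA
  have hspec : ∀ n : ℕ, (· ^ 3 ^ n) '' spectrum ℂ A ⊆ (· ^ 2 ^ n) '' spectrum ℂ A := by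
    intro n
    have hcoe : (star ((b ^ n : unitary (H →L[ℂ] H)) : H →L[ℂ] H)) * (A ^ 2 ^ n) *
        ((b ^ n : unitary (H →L[ℂ] H)) : H →L[ℂ] H) = A ^ 3 ^ n := by
      have h2 : (((b ^ n)⁻¹ * a ^ 2 ^ n * b ^ n : unitary (H →L[ℂ] H)) : H →L[ℂ] H) =
          ((a ^ 3 ^ n : unitary (H →L[ℂ] H)) : H →L[ℂ] H) := congrArg _ (hconj n)
      rw [MulMemClass.coe_mul, MulMemClass.coe_mul, ← Unitary.star_eq_inv,
        Unitary.coe_star, SubmonoidClass.coe_pow, SubmonoidClass.coe_pow,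
        SubmonoidClass.coe_pow] at h2
      exact h2
    have h1 : spectrum ℂ (A ^ 3 ^ n) = spectrum ℂ (A ^ 2 ^ n) := by
      rw [← hcoe]
      exact Unitary.spectrum_star_left_conjugate
    rw [← spectrum.map_pow_of_pos A (n := 3 ^ n) (Nat.pow_pos (by norm_num)),
      ← spectrum.map_pow_of_pos A (n := 2 ^ n) (Nat.pow_pos (by norm_num)), h1]
  have h0 : (0 : ℂ) ∉ spectrum ℂ A :=
    spectrum.zero_notMem ℂ (Unitary.toUnits a).isUnit
  obtain ⟨N, hNodd, hN1⟩ := exists_odd_pow_eq_one (spectrum_finite_clm A) h0 hspec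
  -- a ^ N = 1 via continuous functional calculus
  have hAN : a ^ N = 1 := by
    have hAnorm : IsStarNormal A := hA ▸ isStarNormal_of_mem_unitary a.prop
    have hpow := cfc_pow (R := ℂ) (fun z : ℂ => z) N A
    rw [cfc_id' ℂ A] at hpow
    have h1 : A ^ N = 1 := by
      calc A ^ N = cfc (fun z : ℂ => z ^ N) A := hpow.symm
        _ = cfc (fun _ : ℂ => (1 : ℂ)) A := cfc_congr fun z hz => hN1 z hz
        _ = 1 := cfc_const_one ℂ A
    have h2 : ((a ^ N : unitary (H →L[ℂ] H)) : H →L[ℂ] H) =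
        ((1 : unitary (H →L[ℂ] H)) : H →L[ℂ] H) := by
      rw [SubmonoidClass.coe_pow, OneMemClass.coe_one]
      exact h1
    exact Subtype.ext h2
  -- finish
  set c := b⁻¹ * a * b with hcdef
  have hc2 : c ^ 2 = a ^ 3 := by rw [hcdef, conj_pow_aux, hrel]
  have hcN : c ^ N = 1 := by rw [hcdef, conj_pow_aux, hAN, mul_one, inv_mul_cancel]
  obtain ⟨k, hk⟩ := hNodd
  have hc : c = a ^ (3 * (k + 1)) := by
    calc c = c ^ (N + 1) := by rw [pow_succ, hcN, one_mul]
      _ = (c ^ 2) ^ (k + 1) := by rw [← pow_mul]; congr 1; omega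
      _ = (a ^ 3) ^ (k + 1) := by rw [hc2]
      _ = a ^ (3 * (k + 1)) := by rw [← pow_mul]
  have hcomm : a * c = c * a := by
    rw [hc, ← pow_succ', ← pow_succ]
  calc a * b⁻¹ * a * b = a * c := by rw [hcdef]; group
    _ = c * a := hcomm
    _ = b⁻¹ * a * b * a := by rw [hcdef]
end

section
/- Let U, V be unitary operators on a Hilbert space of dimension at most d (d ≥ 3) with ‖V⁻¹U²V − U³‖ < ε in operator norm, where ε < 1/(6·3^d·d·N_d) and N_d = 3^d·lcm{3¹−2¹,…,3^d−2^d}. Then ‖U V⁻¹ U V − V⁻¹ U V U‖ < 4 d³ N_d ε. -/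
open scoped ENNReal Pointwise

section helpers
variable {A : Type*} [CStarAlgebra A]

/-- inverse of a normal unit is normal -/
lemma myIsStarNormal_inv {T : A} (u : Aˣ) (hu : (u : A) = T) (hn : IsStarNormal T) :
    IsStarNormal (↑u⁻¹ : A) := by
  set a : A := ↑u⁻¹ with ha
  have hTa : T * a = 1 := by rw [← hu, ha, Units.mul_inv]
  have haT : a * T = 1 := by rw [← hu, ha, Units.inv_mul]
  have hc : star T * T = T * star T := hn.star_comm_self.eq
  have s1 : a * star T = star T * a := by
    calc a * star T = a * star T * (T * a) := by rw [hTa, mul_one]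
    _ = a * (star T * T) * a := by noncomm_ring
    _ = a * (T * star T) * a := by rw [hc]
    _ = (a * T) * (star T * a) := by noncomm_ring
    _ = star T * a := by rw [haT, one_mul]
  have s2 : T * star a = star a * T := by
    have h := congrArg star s1
    simp only [star_mul, star_star] at h
    exact h
  constructor
  show star a * a = a * star a
  calc star a * a = (a * T) * (star a * a) := by rw [haT, one_mul]
    _ = a * (T * star a) * a := by noncomm_ring
    _ = a * (star a * T) * a := by rw [s2]
    _ = (a * star a) * (T * a) := by noncomm_ring
    _ = a * star a := by rw [hTa, mul_one]

/-- key perturbation lemma: spectrum of B is within ε of spectrum of a unitary Aop -/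
lemma spec_close {Aop B : A} (hA : Aop ∈ unitary A) {ε : ℝ} (hB : ‖B - Aop‖ < ε)
    {z : ℂ} (hz : z ∈ spectrum ℂ B) : ∃ w ∈ spectrum ℂ Aop, ‖z - w‖ < ε := by
  have hε : 0 < ε := lt_of_le_of_lt (norm_nonneg _) hB
  by_contra hcon
  push_neg at hcon
  -- hcon : ∀ w ∈ spectrum ℂ Aop, ε ≤ ‖z - w‖
  set T : A := algebraMap ℂ A z - Aop with hT
  have hzA : z ∉ spectrum ℂ Aop := by
    intro hmem
    have h0 := hcon z hmem
    simp only [sub_self, norm_zero] at h0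
    linarith
  have hTu : IsUnit T := by
    rw [spectrum.mem_iff, not_not] at hzA
    exact hzA
  have hAmem := Unitary.mem_iff.mp hA
  -- T is normal
  have hTn : IsStarNormal T := by
    constructor
    rw [hT, star_sub, ← algebraMap_star_comm]
    apply Commute.sub_left
    · exact Algebra.commute_algebraMap_left _ _
    · apply Commute.sub_right
      · exact (Algebra.commute_algebraMap_left _ _).symm
      · exact hAmem.1.trans hAmem.2.symm
  obtain ⟨u, hu⟩ := hTu
  have hinv_n : IsStarNormal (↑u⁻¹ : A) := myIsStarNormal_inv u hu hTn
  -- bound on the norm of the inverse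
  have hle : (‖(↑u⁻¹ : A)‖₊ : ℝ≥0∞) ≤ ENNReal.ofReal ε⁻¹ := by
    rw [← IsStarNormal.spectralRadius_eq_nnnorm, spectralRadius]
    refine iSup₂_le fun k hk => ?_
    rw [← spectrum.map_inv, Set.mem_inv, hu, hT, ← spectrum.singleton_sub_eq] at hk
    obtain ⟨z', hz', w, hw, hkw⟩ := Set.mem_sub.mp hk
    rw [Set.mem_singleton_iff] at hz'
    subst hz'
    have hεk : ε ≤ ‖k⁻¹‖ := by rw [← hkw]; exact hcon w hw
    have hk0 : ‖k‖ ≤ ε⁻¹ := by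
      rcases eq_or_ne k 0 with rfl | hk0
      · simpa using inv_nonneg.mpr hε.le
      · rw [norm_inv] at hεk
        calc ‖k‖ = (‖k‖⁻¹)⁻¹ := (inv_inv _).symm
        _ ≤ ε⁻¹ := inv_anti₀ hε hεk
    rw [← enorm_eq_nnnorm, ← ofReal_norm]
    exact ENNReal.ofReal_le_ofReal hk0
  have hinv : ‖(↑u⁻¹ : A)‖ ≤ ε⁻¹ := by
    calc ‖(↑u⁻¹ : A)‖ = ((‖(↑u⁻¹ : A)‖₊ : ℝ≥0∞)).toReal := by simp
    _ ≤ (ENNReal.ofReal ε⁻¹).toReal := ENNReal.toReal_mono ENNReal.ofReal_ne_top hle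
    _ = ε⁻¹ := ENNReal.toReal_ofReal (inv_nonneg.mpr hε.le)
  set r : A := ↑u⁻¹ * (Aop - B) with hr
  have hrn : ‖r‖ < 1 := by
    calc ‖r‖ ≤ ‖(↑u⁻¹ : A)‖ * ‖Aop - B‖ := norm_mul_le _ _
    _ < ε⁻¹ * ε := by
        apply mul_lt_mul' hinv (norm_sub_rev B Aop ▸ hB) (norm_nonneg _) (inv_pos.mpr hε)
    _ = 1 := inv_mul_cancel₀ hε.ne'
  have hunit : IsUnit ((1 : A) + r) := by
    refine ⟨Units.oneSub (-r) (by simpa using hrn), ?_⟩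
    rw [Units.val_oneSub, sub_neg_eq_add]
  have hfinal : IsUnit (algebraMap ℂ A z - B) := by
    have heq : algebraMap ℂ A z - B = ↑u * (1 + r) := by
      rw [mul_add, mul_one, hr, ← mul_assoc, Units.mul_inv, one_mul, hu, hT]
      abel
    rw [heq]
    exact u.isUnit.mul hunit
  exact spectrum.mem_iff.mp hz hfinal

end helpers

section helpers2

lemma my_norm_pow_le_one {R : Type*} [NormedRing R] [NormOneClass R] {b : R}
    (hb : ‖b‖ ≤ 1) (n : ℕ) : ‖b ^ n‖ ≤ 1 := by
  induction n with
  | zero => simp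
  | succ n ih =>
    rw [pow_succ]
    exact (norm_mul_le _ _).trans (by nlinarith [norm_nonneg (b ^ n), norm_nonneg b])

lemma my_norm_pow_sub_pow {R : Type*} [NormedRing R] [NormOneClass R] (a b : R)
    (ha : ‖a‖ ≤ 1) (hb : ‖b‖ ≤ 1) (n : ℕ) : ‖a ^ n - b ^ n‖ ≤ n * ‖a - b‖ := by
  induction n with
  | zero => simp
  | succ n ih =>
    have hbn : ‖b ^ n‖ ≤ 1 := my_norm_pow_le_one hb n
    have hid : a ^ (n + 1) - b ^ (n + 1) = (a ^ n - b ^ n) * a + b ^ n * (a - b) := by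
      rw [pow_succ, pow_succ]; noncomm_ring
    calc ‖a ^ (n + 1) - b ^ (n + 1)‖ ≤ ‖(a ^ n - b ^ n) * a‖ + ‖b ^ n * (a - b)‖ := by
          rw [hid]; exact norm_add_le _ _
    _ ≤ ‖a ^ n - b ^ n‖ * ‖a‖ + ‖b ^ n‖ * ‖a - b‖ :=
          add_le_add (norm_mul_le _ _) (norm_mul_le _ _)
    _ ≤ (n * ‖a - b‖) * 1 + 1 * ‖a - b‖ := by
          refine add_le_add (mul_le_mul ih ha (norm_nonneg _) (by positivity)) ?_
          exact mul_le_mul_of_nonneg_right hbn (norm_nonneg _)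
    _ = (n + 1 : ℕ) * ‖a - b‖ := by push_cast; ring

lemma my_conj_pow {A : Type*} [CStarAlgebra A] (U V : A) (hV : V ∈ unitary A) (n : ℕ) :
    (star V * U * V) ^ n = star V * U ^ n * V := by
  have hVm := Unitary.mem_iff.mp hV
  induction n with
  | zero => simpa using hVm.1.symm
  | succ n ih =>
    rw [pow_succ, pow_succ, ih]
    calc star V * U ^ n * V * (star V * U * V)
        = star V * U ^ n * (V * star V) * U * V := by noncomm_ring
    _ = star V * (U ^ n * U) * V := by rw [hVm.2]; noncomm_ring

variable {A : Type*} [CStarAlgebra A] [Nontrivial A]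

lemma my_unitary_norm_pow_sub_one (X : A) (hX : X ∈ unitary A) (n : ℕ) (c : ℝ) (hc : 0 ≤ c)
    (hs : ∀ lam ∈ spectrum ℂ X, ‖lam ^ n - 1‖ ≤ c) : ‖X ^ n - 1‖ ≤ c := by
  set Y : A := X ^ n with hY
  have hYu : Y ∈ unitary A := pow_mem hX n
  have hYm := Unitary.mem_iff.mp hYu
  have hnormal : IsStarNormal (Y - 1) := by
    constructor
    show star (Y - 1) * (Y - 1) = (Y - 1) * star (Y - 1)
    simp only [star_sub, star_one, mul_sub, sub_mul, mul_one, one_mul, hYm.1, hYm.2]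
    abel
  have hspec : spectrum ℂ (Y - 1) = (fun x : ℂ => x ^ n - 1) '' spectrum ℂ X := by
    have h1 : spectrum ℂ (Y - 1) = spectrum ℂ Y - ({1} : Set ℂ) := by
      rw [spectrum.sub_singleton_eq, map_one]
    rw [h1, hY, spectrum.map_pow]
    ext y
    constructor
    · intro hy
      obtain ⟨p, hp, q, hq, hpq⟩ := Set.mem_sub.mp hy
      obtain ⟨lam, hlam, rfl⟩ := hp
      rw [Set.mem_singleton_iff] at hq
      subst hq
      exact ⟨lam, hlam, hpq⟩
    · rintro ⟨lam, hlam, rfl⟩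
      exact Set.mem_sub.mpr ⟨lam ^ n, ⟨lam, hlam, rfl⟩, 1, rfl, rfl⟩
  have hle : (‖Y - 1‖₊ : ℝ≥0∞) ≤ ENNReal.ofReal c := by
    rw [← IsStarNormal.spectralRadius_eq_nnnorm, spectralRadius]
    refine iSup₂_le fun k hk => ?_
    rw [hspec] at hk
    obtain ⟨lam, hlam, rfl⟩ := hk
    rw [← enorm_eq_nnnorm, ← ofReal_norm]
    exact ENNReal.ofReal_le_ofReal (hs lam hlam)
  calc ‖Y - 1‖ = ((‖Y - 1‖₊ : ℝ≥0∞)).toReal := by simp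
  _ ≤ (ENNReal.ofReal c).toReal := ENNReal.toReal_mono ENNReal.ofReal_ne_top hle
  _ = c := ENNReal.toReal_ofReal hc

end helpers2

lemma my_pigeonhole {H : Type*} [NormedAddCommGroup H] [InnerProductSpace ℂ H]
    [FiniteDimensional ℂ H] (U : H →L[ℂ] H) (d : ℕ) (hdim : Module.finrank ℂ H ≤ d)
    (g : Fin (d + 1) → ℂ) (hg : ∀ i, g i ∈ spectrum ℂ U) :
    ∃ i j : Fin (d + 1), i < j ∧ g i = g j := by
  by_contra hcon
  push_neg at hcon
  have hinj : Function.Injective g := by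
    intro i j hij
    rcases lt_trichotomy i j with hlt | heq | hgt
    · exact absurd hij (hcon i j hlt)
    · exact heq
    · exact absurd hij.symm (hcon j i hgt)
  set e := Module.End.toContinuousLinearMap (𝕜 := ℂ) H with he
  set f : H →ₗ[ℂ] H := e.symm U with hf
  have hfU : e f = U := e.apply_symm_apply U
  have hspec : spectrum ℂ U = spectrum ℂ f := by
    rw [← hfU]; exact AlgEquiv.spectrum_eq e f
  have heig : ∀ i, Module.End.HasEigenvalue (f : Module.End ℂ H) (g i) := fun i =>
    Module.End.hasEigenvalue_iff_mem_spectrum.mpr (hspec ▸ hg i)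
  choose v hv using fun i => (heig i).exists_hasEigenvector
  have hli := Module.End.eigenvectors_linearIndependent' f g hinj v hv
  have hcard := hli.fintype_card_le_finrank
  rw [Fintype.card_fin] at hcard
  omega

lemma myL_odd (d : ℕ) : Odd ((Finset.Icc 1 d).lcm (fun j => 3 ^ j - 2 ^ j)) := by
  set L := (Finset.Icc 1 d).lcm (fun j => 3 ^ j - 2 ^ j) with hL
  have hdvd : L ∣ ∏ j ∈ Finset.Icc 1 d, (3 ^ j - 2 ^ j) :=
    Finset.lcm_dvd fun b hb => Finset.dvd_prod_of_mem _ hb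
  have hodd : Odd (∏ j ∈ Finset.Icc 1 d, (3 ^ j - 2 ^ j)) := by
    refine Finset.prod_induction _ Odd (fun a b => Odd.mul) odd_one ?_
    intro j hj
    have hj1 : 1 ≤ j := (Finset.mem_Icc.mp hj).1
    refine Nat.Odd.sub_even (Nat.pow_le_pow_left (by norm_num) j) ?_ ?_
    · exact Odd.pow (by decide : Odd 3)
    · exact (Nat.even_pow).mpr ⟨even_two, by omega⟩
  rw [Nat.not_even_iff_odd.symm] at hodd ⊢
  intro hEven
  exact hodd ((even_iff_two_dvd).mpr (dvd_trans (even_iff_two_dvd.mp hEven) hdvd))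

section MainProof

theorem stmt12 {H : Type*} [NormedAddCommGroup H] [InnerProductSpace ℂ H]
    [FiniteDimensional ℂ H]
    (d : ℕ) (hd : 3 ≤ d) (hdim : Module.finrank ℂ H ≤ d)
    (U V : H →L[ℂ] H) (hU : U ∈ unitary (H →L[ℂ] H)) (hV : V ∈ unitary (H →L[ℂ] H))
    (ε : ℝ) (hε : ε < 1 / (6 * 3 ^ d * d * Npaper d))
    (h : ‖star V * U ^ 2 * V - U ^ 3‖ < ε) :
    ‖U * (star V * U * V) - (star V * U * V) * U‖ < 4 * d ^ 3 * Npaper d * ε := by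
  classical
  have hε0 : 0 < ε := lt_of_le_of_lt (norm_nonneg _) h
  -- number-theoretic facts
  set L : ℕ := (Finset.Icc 1 d).lcm (fun j => 3 ^ j - 2 ^ j) with hLdef
  have hLodd : Odd L := myL_odd d
  have hLpos : 0 < L := by
    rcases hLodd with ⟨k, hk⟩; omega
  have hNval : Npaper d = 3 ^ d * L := rfl
  have hNpos : 0 < Npaper d := by
    rw [hNval]; positivity
  have hNodd : Odd (Npaper d) := by
    rw [hNval]; exact (Odd.pow (by decide : Odd 3)).mul hLodd
  have hRHSpos : (0:ℝ) < 4 * d ^ 3 * Npaper d * ε := by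
    have : (0:ℝ) < (d:ℝ) := by exact_mod_cast lt_of_lt_of_le (by norm_num) hd
    have hN : (0:ℝ) < (Npaper d : ℝ) := by exact_mod_cast hNpos
    positivity
  rcases subsingleton_or_nontrivial H with hsub | hnt
  · -- trivial space
    have hss : Subsingleton (H →L[ℂ] H) :=
      ⟨fun f g => ContinuousLinearMap.ext fun x => Subsingleton.elim _ _⟩
    have h0 : U * (star V * U * V) - (star V * U * V) * U = 0 := Subsingleton.elim _ _
    rw [h0, norm_zero]
    exact hRHSpos
  -- main case
  haveI : Nontrivial (H →L[ℂ] H) := by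
    obtain ⟨x, hx⟩ := exists_ne (0 : H)
    exact ⟨1, 0, fun hc => hx (by simpa using ContinuousLinearMap.ext_iff.mp hc x)⟩
  set W : H →L[ℂ] H := star V * U * V with hWdef
  have hWu : W ∈ unitary (H →L[ℂ] H) := mul_mem (mul_mem (Unitary.star_mem hV) hU) hV
  have hVm := Unitary.mem_iff.mp hV
  have hW2 : W ^ 2 = star V * U ^ 2 * V := my_conj_pow U V hV 2
  have hWU3 : ‖W ^ 2 - U ^ 3‖ < ε := by rw [hW2]; exact h
  -- spectra live on the circle
  have hScirc : ∀ lam ∈ spectrum ℂ U, ‖lam‖ = 1 := fun lam hl =>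
    mem_sphere_zero_iff_norm.mp (spectrum.subset_circle_of_unitary hU hl)
  -- the approximate matching on the spectrum
  have hkey : ∀ lam ∈ spectrum ℂ U, ∃ mu ∈ spectrum ℂ U, ‖lam ^ 3 - mu ^ 2‖ < ε := by
    intro lam hl
    have h3 : lam ^ 3 ∈ spectrum ℂ (U ^ 3) := by
      rw [spectrum.map_pow]; exact ⟨lam, hl, rfl⟩
    have hAu : (star V * U ^ 2 * V) ∈ unitary (H →L[ℂ] H) :=
      mul_mem (mul_mem (Unitary.star_mem hV) (pow_mem hU 2)) hV
    have hBA : ‖U ^ 3 - (star V * U ^ 2 * V)‖ < ε := by rwa [norm_sub_rev] at h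
    obtain ⟨w, hw, hww⟩ := spec_close hAu hBA h3
    have hconj : spectrum ℂ (star V * U ^ 2 * V) = spectrum ℂ (U ^ 2) := by
      let uV : (H →L[ℂ] H)ˣ := ⟨V, star V, hVm.2, hVm.1⟩
      exact spectrum.units_conjugate' (u := uV) (a := U ^ 2)
    rw [hconj, spectrum.map_pow] at hw
    obtain ⟨mu, hmu, rfl⟩ := hw
    exact ⟨mu, hmu, hww⟩
  -- the spectral conclusion : every eigenvalue nearly satisfies λ^N = 1
  have hlamN : ∀ lam ∈ spectrum ℂ U, ‖lam ^ (Npaper d) - 1‖ ≤ (Npaper d : ℝ) * ε := by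
    intro lam hlam
    -- choice of successor
    have hkey' : ∀ x : ℂ, ∃ y : ℂ, x ∈ spectrum ℂ U →
        (y ∈ spectrum ℂ U ∧ ‖x ^ 3 - y ^ 2‖ < ε) := by
      intro x
      by_cases hx : x ∈ spectrum ℂ U
      · obtain ⟨mu, h1, h2⟩ := hkey x hx
        exact ⟨mu, fun _ => ⟨h1, h2⟩⟩
      · exact ⟨0, fun hc => absurd hc hx⟩
    choose nxt hnxt using hkey'
    set seq : ℕ → ℂ := fun k => nxt^[k] lam with hseq
    have hmem : ∀ k, seq k ∈ spectrum ℂ U := by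
      intro k
      induction k with
      | zero => simpa [hseq] using hlam
      | succ k ih =>
        have : seq (k+1) = nxt (seq k) := Function.iterate_succ_apply' nxt k lam
        rw [this]
        exact (hnxt _ ih).1
    have hstep : ∀ k, ‖(seq k) ^ 3 - (seq (k+1)) ^ 2‖ ≤ ε := by
      intro k
      have : seq (k+1) = nxt (seq k) := Function.iterate_succ_apply' nxt k lam
      rw [this]
      exact ((hnxt _ (hmem k)).2).le
    have hn1 : ∀ k n, ‖(seq k) ^ n‖ ≤ 1 := by
      intro k n
      rw [norm_pow, hScirc _ (hmem k), one_pow]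
    -- the chain inequality
    have hchain : ∀ k i, ‖seq i ^ (3 ^ k) - seq (i + k) ^ (2 ^ k)‖ ≤ ((3 ^ k - 2 ^ k : ℕ) : ℝ) * ε := by
      intro k
      induction k with
      | zero => intro i; simp
      | succ k ih =>
        intro i
        have h23 : (2:ℕ) ^ k ≤ 3 ^ k := Nat.pow_le_pow_left (by norm_num) k
        have e1 : seq i ^ (3 ^ (k+1)) = (seq i ^ 3) ^ (3 ^ k) := by
          rw [← pow_mul, pow_succ, mul_comm (3^k) 3]
        have e2 : (seq (i+1) ^ 2) ^ (3 ^ k) = (seq (i+1) ^ (3 ^ k)) ^ 2 := by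
          rw [← pow_mul, ← pow_mul, mul_comm]
        have e3 : seq (i + (k+1)) ^ (2 ^ (k+1)) = (seq ((i+1) + k) ^ (2 ^ k)) ^ 2 := by
          rw [show i + (k+1) = (i+1) + k by omega, ← pow_mul, pow_succ]
        have b1 : ‖(seq i ^ 3) ^ (3 ^ k) - (seq (i+1) ^ 2) ^ (3 ^ k)‖ ≤ (3 ^ k : ℕ) * ε := by
          calc ‖(seq i ^ 3) ^ (3 ^ k) - (seq (i+1) ^ 2) ^ (3 ^ k)‖
              ≤ (3 ^ k : ℕ) * ‖seq i ^ 3 - seq (i+1) ^ 2‖ :=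
                my_norm_pow_sub_pow _ _ (hn1 i 3) (hn1 (i+1) 2) _
          _ ≤ (3 ^ k : ℕ) * ε := by
                have h3k : (0:ℝ) ≤ ((3 ^ k : ℕ) : ℝ) := by positivity
                exact mul_le_mul_of_nonneg_left (hstep i) h3k
        have b2 : ‖(seq (i+1) ^ (3 ^ k)) ^ 2 - (seq ((i+1) + k) ^ (2 ^ k)) ^ 2‖
            ≤ 2 * (((3 ^ k - 2 ^ k : ℕ) : ℝ) * ε) := by
          calc ‖(seq (i+1) ^ (3 ^ k)) ^ 2 - (seq ((i+1) + k) ^ (2 ^ k)) ^ 2‖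
              ≤ (2:ℕ) * ‖seq (i+1) ^ (3 ^ k) - seq ((i+1) + k) ^ (2 ^ k)‖ :=
                my_norm_pow_sub_pow _ _ (hn1 (i+1) _) (hn1 ((i+1)+k) _) 2
          _ ≤ 2 * (((3 ^ k - 2 ^ k : ℕ) : ℝ) * ε) := by
                have hih := ih (i+1)
                push_cast
                exact mul_le_mul_of_nonneg_left hih (by norm_num)
        calc ‖seq i ^ (3 ^ (k+1)) - seq (i + (k+1)) ^ (2 ^ (k+1))‖
            = ‖((seq i ^ 3) ^ (3 ^ k) - (seq (i+1) ^ 2) ^ (3 ^ k))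
              + ((seq (i+1) ^ (3 ^ k)) ^ 2 - (seq ((i+1) + k) ^ (2 ^ k)) ^ 2)‖ := by
              rw [e1, e3]
              congr 1
              rw [← e2]
              abel
        _ ≤ ‖(seq i ^ 3) ^ (3 ^ k) - (seq (i+1) ^ 2) ^ (3 ^ k)‖
              + ‖(seq (i+1) ^ (3 ^ k)) ^ 2 - (seq ((i+1) + k) ^ (2 ^ k)) ^ 2‖ := norm_add_le _ _
        _ ≤ (3 ^ k : ℕ) * ε + 2 * (((3 ^ k - 2 ^ k : ℕ) : ℝ) * ε) := add_le_add b1 b2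
        _ = ((3 ^ (k+1) - 2 ^ (k+1) : ℕ) : ℝ) * ε := by
              have h1 : (3:ℕ) ^ (k+1) - 2 ^ (k+1) = 3 ^ k + 2 * (3 ^ k - 2 ^ k) := by
                rw [pow_succ, pow_succ]; omega
              rw [h1]
              push_cast [Nat.sub_add_cancel, h23]
              ring
    -- pigeonhole
    obtain ⟨iF, jF, hij, hval⟩ := my_pigeonhole U d hdim (fun t => seq t) (fun t => hmem t)
    set i0 : ℕ := (iF : ℕ) with hi0
    set j0 : ℕ := (jF : ℕ) with hj0
    have hij0 : i0 < j0 := hij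
    have hjd : j0 ≤ d := Nat.lt_succ_iff.mp jF.isLt
    set m : ℕ := j0 - i0 with hm
    have hm1 : 1 ≤ m := by omega
    have hmd : m ≤ d := by omega
    set mu : ℂ := seq i0 with hmu
    have hmemmu : mu ∈ spectrum ℂ U := by rw [hmu]; exact hmem i0
    have hmucirc : ‖mu‖ = 1 := hScirc _ hmemmu
    have hmuval : seq j0 = mu := by rw [hmu]; exact hval.symm
    have h23m : (2:ℕ) ^ m ≤ 3 ^ m := Nat.pow_le_pow_left (by norm_num) m
    set e : ℕ := 3 ^ m - 2 ^ m with he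
    have hepos : 0 < e := by
      have : (2:ℕ) ^ m < 3 ^ m := Nat.pow_lt_pow_left (by norm_num) (by omega)
      omega
    have c1 : ‖mu ^ (3 ^ m) - mu ^ (2 ^ m)‖ ≤ (e : ℝ) * ε := by
      have hc := hchain m i0
      rw [show i0 + m = j0 by omega, hmuval, ← hmu] at hc
      exact hc
    have c2 : ‖mu ^ e - 1‖ ≤ (e : ℝ) * ε := by
      have hfac : mu ^ (3 ^ m) - mu ^ (2 ^ m) = mu ^ (2 ^ m) * (mu ^ e - 1) := by
        rw [mul_sub, mul_one, ← pow_add]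
        congr 2
        omega
      have hmn : ‖mu ^ (2 ^ m)‖ = 1 := by rw [norm_pow, hmucirc, one_pow]
      calc ‖mu ^ e - 1‖ = ‖mu ^ (2 ^ m)‖ * ‖mu ^ e - 1‖ := by rw [hmn, one_mul]
      _ = ‖mu ^ (3 ^ m) - mu ^ (2 ^ m)‖ := by rw [← norm_mul, ← hfac]
      _ ≤ (e : ℝ) * ε := c1
    have hedvd : e ∣ L := by
      rw [hLdef, he]
      exact Finset.dvd_lcm (Finset.mem_Icc.mpr ⟨hm1, hmd⟩)
    obtain ⟨t, ht⟩ := hedvd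
    have c3 : ‖mu ^ L - 1‖ ≤ (L : ℝ) * ε := by
      have : mu ^ L = (mu ^ e) ^ t := by rw [← pow_mul, ht]
      rw [this]
      calc ‖(mu ^ e) ^ t - 1‖ = ‖(mu ^ e) ^ t - 1 ^ t‖ := by rw [one_pow]
      _ ≤ (t : ℝ) * ‖mu ^ e - 1‖ := my_norm_pow_sub_pow _ _
            (by rw [norm_pow, hmucirc, one_pow]) (by simp) t
      _ ≤ (t : ℝ) * ((e : ℝ) * ε) := by
            have ht0 : (0:ℝ) ≤ (t:ℝ) := by positivity
            exact mul_le_mul_of_nonneg_left c2 ht0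
      _ = (L : ℝ) * ε := by rw [ht]; push_cast; ring
    have c4 : ‖lam ^ (3 ^ i0) - mu ^ (2 ^ i0)‖ ≤ ((3 ^ i0 - 2 ^ i0 : ℕ) : ℝ) * ε := by
      have h0 := hchain i0 0
      rw [zero_add] at h0
      have hs0 : seq 0 = lam := by simp [hseq]
      rw [hs0, ← hmu] at h0
      exact h0
    have h23i : (2:ℕ) ^ i0 ≤ 3 ^ i0 := Nat.pow_le_pow_left (by norm_num) i0
    have hlamcirc : ‖lam‖ = 1 := hScirc _ hlam
    have c5 : ‖lam ^ (3 ^ i0 * L) - mu ^ (2 ^ i0 * L)‖ ≤ (L : ℝ) * (((3 ^ i0 - 2 ^ i0 : ℕ) : ℝ) * ε) := by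
      rw [pow_mul, pow_mul]
      calc ‖(lam ^ (3 ^ i0)) ^ L - (mu ^ (2 ^ i0)) ^ L‖
          ≤ (L : ℝ) * ‖lam ^ (3 ^ i0) - mu ^ (2 ^ i0)‖ := my_norm_pow_sub_pow _ _
            (by rw [norm_pow, hlamcirc, one_pow]) (by rw [norm_pow, hmucirc, one_pow]) L
      _ ≤ (L : ℝ) * (((3 ^ i0 - 2 ^ i0 : ℕ) : ℝ) * ε) := by
            have hL0 : (0:ℝ) ≤ (L:ℝ) := by positivity
            exact mul_le_mul_of_nonneg_left c4 hL0
    have c6 : ‖mu ^ (2 ^ i0 * L) - 1‖ ≤ ((2 ^ i0 : ℕ) : ℝ) * ((L : ℝ) * ε) := by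
      rw [mul_comm (2 ^ i0) L, pow_mul]
      calc ‖(mu ^ L) ^ (2 ^ i0) - 1‖ = ‖(mu ^ L) ^ (2 ^ i0) - 1 ^ (2 ^ i0)‖ := by rw [one_pow]
      _ ≤ ((2 ^ i0 : ℕ) : ℝ) * ‖mu ^ L - 1‖ := my_norm_pow_sub_pow _ _
            (by rw [norm_pow, hmucirc, one_pow]) (by simp) _
      _ ≤ ((2 ^ i0 : ℕ) : ℝ) * ((L : ℝ) * ε) := by
            have h20 : (0:ℝ) ≤ ((2 ^ i0 : ℕ) : ℝ) := by positivity
            exact mul_le_mul_of_nonneg_left c3 h20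
    have c7 : ‖lam ^ (3 ^ i0 * L) - 1‖ ≤ ((3 ^ i0 : ℕ) : ℝ) * (L : ℝ) * ε := by
      calc ‖lam ^ (3 ^ i0 * L) - 1‖
          ≤ ‖lam ^ (3 ^ i0 * L) - mu ^ (2 ^ i0 * L)‖ + ‖mu ^ (2 ^ i0 * L) - 1‖ := by
            have : lam ^ (3 ^ i0 * L) - 1
                = (lam ^ (3 ^ i0 * L) - mu ^ (2 ^ i0 * L)) + (mu ^ (2 ^ i0 * L) - 1) := by abel
            rw [this]; exact norm_add_le _ _
      _ ≤ (L : ℝ) * (((3 ^ i0 - 2 ^ i0 : ℕ) : ℝ) * ε) + ((2 ^ i0 : ℕ) : ℝ) * ((L : ℝ) * ε) :=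
            add_le_add c5 c6
      _ = ((3 ^ i0 : ℕ) : ℝ) * (L : ℝ) * ε := by
            push_cast [Nat.cast_sub h23i]
            ring
    have hi0d : i0 ≤ d := by omega
    have c8 : ‖lam ^ (Npaper d) - 1‖ ≤ (Npaper d : ℝ) * ε := by
      have hexp : Npaper d = (3 ^ i0 * L) * 3 ^ (d - i0) := by
        rw [hNval, mul_comm (3 ^ i0) L, mul_assoc, ← pow_add,
          show i0 + (d - i0) = d by omega, mul_comm]
      rw [hexp, pow_mul]
      calc ‖(lam ^ (3 ^ i0 * L)) ^ (3 ^ (d - i0)) - 1‖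
          = ‖(lam ^ (3 ^ i0 * L)) ^ (3 ^ (d - i0)) - 1 ^ (3 ^ (d - i0))‖ := by rw [one_pow]
      _ ≤ ((3 ^ (d - i0) : ℕ) : ℝ) * ‖lam ^ (3 ^ i0 * L) - 1‖ := my_norm_pow_sub_pow _ _
            (by rw [norm_pow, hlamcirc, one_pow]) (by simp) _
      _ ≤ ((3 ^ (d - i0) : ℕ) : ℝ) * (((3 ^ i0 : ℕ) : ℝ) * (L : ℝ) * ε) := by
            have h30 : (0:ℝ) ≤ ((3 ^ (d - i0) : ℕ) : ℝ) := by positivity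
            exact mul_le_mul_of_nonneg_left c7 h30
      _ = (((3 ^ i0 * L) * 3 ^ (d - i0) : ℕ) : ℝ) * ε := by push_cast; ring
    exact c8
  -- operator conclusion
  have hNε : (0:ℝ) ≤ (Npaper d : ℝ) * ε := by positivity
  have hUN : ‖U ^ (Npaper d) - 1‖ ≤ (Npaper d : ℝ) * ε :=
    my_unitary_norm_pow_sub_one U hU (Npaper d) _ hNε hlamN
  have hWN : ‖W ^ (Npaper d) - 1‖ ≤ (Npaper d : ℝ) * ε := by
    have hid : W ^ (Npaper d) - 1 = star V * (U ^ (Npaper d) - 1) * V := by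
      rw [hWdef, my_conj_pow U V hV]
      rw [mul_sub, sub_mul, mul_one]
      rw [hVm.1]
    rw [hid, mul_assoc, CStarRing.norm_mem_unitary_mul _ (Unitary.star_mem hV),
      CStarRing.norm_mul_mem_unitary _ hV]
    exact hUN
  obtain ⟨k, hk⟩ := hNodd
  set a : ℕ := k + 1 with ha
  have ha2 : 2 * a = Npaper d + 1 := by omega
  have haN : a ≤ Npaper d := by omega
  have hapos : 0 < a := by omega
  have hWnorm : ‖W‖ = 1 := CStarRing.norm_of_mem_unitary hWu
  have hUnorm : ‖U‖ = 1 := CStarRing.norm_of_mem_unitary hU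
  have t1 : ‖W ^ (2 * a) - U ^ (3 * a)‖ < (a : ℝ) * ε := by
    rw [pow_mul, pow_mul]
    calc ‖(W ^ 2) ^ a - (U ^ 3) ^ a‖ ≤ (a : ℝ) * ‖W ^ 2 - U ^ 3‖ :=
          my_norm_pow_sub_pow _ _
            (le_of_eq (CStarRing.norm_of_mem_unitary (pow_mem hWu 2)))
            (le_of_eq (CStarRing.norm_of_mem_unitary (pow_mem hU 3))) a
    _ < (a : ℝ) * ε := by
          have ha0 : (0:ℝ) < (a:ℝ) := by exact_mod_cast hapos
          exact mul_lt_mul_of_pos_left hWU3 ha0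
  have t2 : ‖W ^ (2 * a) - W‖ ≤ (Npaper d : ℝ) * ε := by
    have hid : W ^ (2 * a) - W = (W ^ (Npaper d) - 1) * W := by
      rw [sub_mul, one_mul, ← pow_succ, ← ha2]
    rw [hid]
    calc ‖(W ^ (Npaper d) - 1) * W‖ ≤ ‖W ^ (Npaper d) - 1‖ * ‖W‖ := norm_mul_le _ _
    _ = ‖W ^ (Npaper d) - 1‖ := by rw [hWnorm, mul_one]
    _ ≤ (Npaper d : ℝ) * ε := hWN
  have t3 : ‖W - U ^ (3 * a)‖ < (Npaper d : ℝ) * ε + (a : ℝ) * ε := by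
    calc ‖W - U ^ (3 * a)‖ ≤ ‖W - W ^ (2 * a)‖ + ‖W ^ (2 * a) - U ^ (3 * a)‖ := by
          have : W - U ^ (3 * a) = (W - W ^ (2 * a)) + (W ^ (2 * a) - U ^ (3 * a)) := by abel
          rw [this]; exact norm_add_le _ _
    _ < (Npaper d : ℝ) * ε + (a : ℝ) * ε := by
          rw [norm_sub_rev]
          exact add_lt_add_of_le_of_lt t2 t1
  have hcommid : U * W - W * U = U * (W - U ^ (3 * a)) - (W - U ^ (3 * a)) * U := by
    have hc : U * U ^ (3 * a) = U ^ (3 * a) * U := by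
      rw [← pow_succ', ← pow_succ]
    rw [mul_sub, sub_mul, hc]
    abel
  calc ‖U * W - W * U‖ = ‖U * (W - U ^ (3 * a)) - (W - U ^ (3 * a)) * U‖ := by rw [hcommid]
  _ ≤ ‖U * (W - U ^ (3 * a))‖ + ‖(W - U ^ (3 * a)) * U‖ := norm_sub_le _ _
  _ ≤ ‖U‖ * ‖W - U ^ (3 * a)‖ + ‖W - U ^ (3 * a)‖ * ‖U‖ :=
        add_le_add (norm_mul_le _ _) (norm_mul_le _ _)
  _ = 2 * ‖W - U ^ (3 * a)‖ := by rw [hUnorm]; ring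
  _ < 2 * ((Npaper d : ℝ) * ε + (a : ℝ) * ε) := by linarith [t3]
  _ ≤ 4 * (d:ℝ) ^ 3 * (Npaper d : ℝ) * ε := by
        have haR : (a : ℝ) ≤ (Npaper d : ℝ) := by exact_mod_cast haN
        have hdR : (3:ℝ) ≤ (d:ℝ) := by exact_mod_cast hd
        have hd3 : (1:ℝ) ≤ (d:ℝ) ^ 3 := one_le_pow₀ (by linarith)
        have hNR : (0:ℝ) ≤ (Npaper d : ℝ) := by positivity
        have step1 : (a:ℝ) * ε ≤ (Npaper d : ℝ) * ε := mul_le_mul_of_nonneg_right haR hε0.le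
        have step2 : 4 * ((Npaper d : ℝ) * ε) ≤ (d:ℝ) ^ 3 * (4 * ((Npaper d : ℝ) * ε)) :=
          le_mul_of_one_le_left (by positivity) hd3
        nlinarith [step1, step2]

end MainProof
end

section
/- Let U be a unitary on a Hilbert space of dimension at most d, write its eigenvalues as e^{2πiλ} with λ ∈ ℝ/ℤ, and suppose that for every eigenvalue λ₀ there is an eigenvalue λ₁ with |3λ₀ − 2λ₁| < ε (circle metric), where ε < 1/(6·3^d·d·N_d). Then every eigenvalue λ of U satisfies |N_d·λ| < 3^d·d·N_d·ε, i.e., λ is within 3^d·d·ε of a rational with denominator N_d. -/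
lemma coe_mul_nat (n : ℕ) (x : ℝ) :
    (((n : ℝ) * x : ℝ) : AddCircle (1:ℝ)) = n • ((x : ℝ) : AddCircle (1:ℝ)) := by
  rw [← AddCircle.coe_nsmul, nsmul_eq_mul]

lemma chainA (μ : ℕ → ℝ) (ε : ℝ)
    (hb : ∀ k, ‖((3 * μ k - 2 * μ (k+1) : ℝ) : AddCircle (1:ℝ))‖ < ε) (i : ℕ) :
    ∀ t, ‖(((3:ℝ)^t * μ i - 2^t * μ (i+t) : ℝ) : AddCircle (1:ℝ))‖ ≤ ((3:ℝ)^t - 2^t) * ε := by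
  intro t
  induction t with
  | zero => simp
  | succ t ih =>
    have key : ((3:ℝ)^(t+1) * μ i - 2^(t+1) * μ (i+(t+1))) =
        ((3:ℕ):ℝ) * ((3:ℝ)^t * μ i - 2^t * μ (i+t))
          + (((2^t:ℕ):ℝ)) * (3 * μ (i+t) - 2 * μ ((i+t)+1)) := by
      push_cast; ring
    rw [key, AddCircle.coe_add, coe_mul_nat, coe_mul_nat]
    have h1 : ‖(3:ℕ) • (((3:ℝ)^t * μ i - 2^t * μ (i+t) : ℝ) : AddCircle (1:ℝ))‖
        ≤ ((3:ℕ):ℝ) * (((3:ℝ)^t - 2^t) * ε) :=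
      (norm_nsmul_le).trans (mul_le_mul_of_nonneg_left ih (by norm_num))
    have h2 : ‖(2^t:ℕ) • ((3 * μ (i+t) - 2 * μ ((i+t)+1) : ℝ) : AddCircle (1:ℝ))‖
        ≤ ((2^t:ℕ):ℝ) * ε :=
      (norm_nsmul_le).trans (mul_le_mul_of_nonneg_left (hb (i+t)).le (by positivity))
    refine (norm_add_le _ _).trans ((add_le_add h1 h2).trans (le_of_eq ?_))
    push_cast; ring

lemma chainC (μ : ℕ → ℝ) (ε : ℝ) (L : ℕ)
    (hb : ∀ k, ‖((3 * μ k - 2 * μ (k+1) : ℝ) : AddCircle (1:ℝ))‖ < ε) (i : ℕ)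
    (h0 : ‖(((L:ℝ) * μ i : ℝ) : AddCircle (1:ℝ))‖ ≤ (L:ℝ) * ε) :
    ∀ t, t ≤ i → ‖((((3^t*L:ℕ):ℝ) * μ (i - t) : ℝ) : AddCircle (1:ℝ))‖ ≤ ((3^t*L:ℕ):ℝ) * ε := by
  intro t
  induction t with
  | zero => simpa using h0
  | succ t ih =>
    intro ht
    have ih' := ih (le_trans (Nat.le_succ t) ht)
    have hk : (i - (t+1)) + 1 = i - t := by omega
    have key : (((3^(t+1)*L:ℕ):ℝ) * μ (i - (t+1))) =
        ((3^t*L:ℕ):ℝ) * (3 * μ (i-(t+1)) - 2 * μ ((i-(t+1))+1))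
          + ((2:ℕ):ℝ) * (((3^t*L:ℕ):ℝ) * μ ((i-(t+1))+1)) := by
      push_cast; ring
    rw [key, AddCircle.coe_add, coe_mul_nat, coe_mul_nat]
    have h1 : ‖(3^t*L:ℕ) • ((3 * μ (i-(t+1)) - 2 * μ ((i-(t+1))+1) : ℝ) : AddCircle (1:ℝ))‖
        ≤ ((3^t*L:ℕ):ℝ) * ε :=
      (norm_nsmul_le).trans (mul_le_mul_of_nonneg_left (hb _).le (by positivity))
    have h2 : ‖(2:ℕ) • ((((3^t*L:ℕ):ℝ) * μ ((i-(t+1))+1) : ℝ) : AddCircle (1:ℝ))‖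
        ≤ ((2:ℕ):ℝ) * (((3^t*L:ℕ):ℝ) * ε) := by
      refine (norm_nsmul_le).trans (mul_le_mul_of_nonneg_left ?_ (by norm_num))
      rw [hk]; exact ih'
    refine (norm_add_le _ _).trans ((add_le_add h1 h2).trans (le_of_eq ?_))
    push_cast; ring

lemma eigenseq {H : Type*} [NormedAddCommGroup H] [InnerProductSpace ℂ H]
    [FiniteDimensional ℂ H] (T : H →ₗ[ℂ] H) (ε : ℝ)
    (h : ∀ l0 : ℝ, Module.End.HasEigenvalue T (Complex.exp (2 * Real.pi * Complex.I * l0)) →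
      ∃ l1 : ℝ, Module.End.HasEigenvalue T (Complex.exp (2 * Real.pi * Complex.I * l1)) ∧
        ‖((3 * l0 - 2 * l1 : ℝ) : AddCircle (1 : ℝ))‖ < ε)
    (l : ℝ) (hl : Module.End.HasEigenvalue T (Complex.exp (2 * Real.pi * Complex.I * l))) :
    ∃ μ : ℕ → ℝ, μ 0 = l ∧
      (∀ k, Module.End.HasEigenvalue T (Complex.exp (2 * Real.pi * Complex.I * (μ k)))) ∧
      (∀ k, ‖((3 * μ k - 2 * μ (k+1) : ℝ) : AddCircle (1 : ℝ))‖ < ε) := by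
  classical
  set E : ℝ → Prop := fun x =>
    Module.End.HasEigenvalue T (Complex.exp (2 * Real.pi * Complex.I * x)) with hE
  let g : ℝ → ℝ := fun x => if hx : E x then Classical.choose (h x hx) else x
  have hg : ∀ x (hx : E x), E (g x) ∧ ‖((3 * x - 2 * g x : ℝ) : AddCircle (1 : ℝ))‖ < ε := by
    intro x hx
    simp only [g, dif_pos hx]
    exact Classical.choose_spec (h x hx)
  have hEk : ∀ k, E (g^[k] l) := by
    intro k
    induction k with
    | zero => exact hl
    | succ k ih => rw [Function.iterate_succ_apply']; exact (hg _ ih).1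
  refine ⟨fun k => g^[k] l, rfl, hEk, ?_⟩
  intro k
  show ‖((3 * g^[k] l - 2 * g^[k+1] l : ℝ) : AddCircle (1 : ℝ))‖ < ε
  rw [Function.iterate_succ_apply']
  exact (hg _ (hEk k)).2

theorem stmt13 {H : Type*} [NormedAddCommGroup H] [InnerProductSpace ℂ H]
    [FiniteDimensional ℂ H]
    (d : ℕ) (hdim : Module.finrank ℂ H ≤ d)
    (U : H →L[ℂ] H) (hU : U ∈ unitary (H →L[ℂ] H))
    (ε : ℝ) (hε : ε < 1 / (6 * 3 ^ d * d * Npaper d))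
    (h : ∀ l0 : ℝ,
      Module.End.HasEigenvalue (U : H →ₗ[ℂ] H)
        (Complex.exp (2 * Real.pi * Complex.I * l0)) →
      ∃ l1 : ℝ,
        Module.End.HasEigenvalue (U : H →ₗ[ℂ] H)
          (Complex.exp (2 * Real.pi * Complex.I * l1)) ∧
        ‖((3 * l0 - 2 * l1 : ℝ) : AddCircle (1 : ℝ))‖ < ε) :
    ∀ l : ℝ,
      Module.End.HasEigenvalue (U : H →ₗ[ℂ] H)
        (Complex.exp (2 * Real.pi * Complex.I * l)) →
      ‖(((Npaper d : ℝ) * l : ℝ) : AddCircle (1 : ℝ))‖ < 3 ^ d * d * Npaper d * ε := by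
  classical
  intro l hl
  set T : H →ₗ[ℂ] H := (U : H →ₗ[ℂ] H) with hT
  -- ε is positive
  obtain ⟨l1', -, hn1⟩ := h l hl
  have hεpos : 0 < ε := lt_of_le_of_lt (norm_nonneg _) hn1
  -- d ≥ 1
  have hd1 : 1 ≤ d := by
    by_contra hd
    have hd0 : d = 0 := by omega
    have hfin : Module.finrank ℂ H = 0 := by omega
    have hs : Subsingleton H := Module.finrank_zero_iff.mp hfin
    obtain ⟨v, hv⟩ := hl.exists_hasEigenvector
    exact hv.right (Subsingleton.elim _ _)
  -- the sequence of eigenvalues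
  obtain ⟨μ, hμ0, hμE, hb⟩ := eigenseq T ε h l hl
  -- pigeonhole: two indices give equal complex eigenvalues
  have hninj : ¬ Function.Injective
      (fun k : Fin (d+1) => Complex.exp (2 * Real.pi * Complex.I * (μ k))) := by
    intro hinj
    have hv : ∀ k : Fin (d+1), ∃ v,
        Module.End.HasEigenvector T (Complex.exp (2 * Real.pi * Complex.I * (μ k))) v :=
      fun k => (hμE k).exists_hasEigenvector
    choose v hv using hv
    have hli := Module.End.eigenvectors_linearIndependent' T
      (fun k : Fin (d+1) => Complex.exp (2 * Real.pi * Complex.I * (μ k))) hinj v hv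
    have hcard := hli.fintype_card_le_finrank
    rw [Fintype.card_fin] at hcard
    omega
  rw [Function.Injective] at hninj
  push_neg at hninj
  obtain ⟨a, b, hab, hne⟩ := hninj
  -- WLOG i < j
  obtain ⟨i, j, hij, hexp⟩ : ∃ i j : Fin (d+1), (i:ℕ) < (j:ℕ) ∧
      Complex.exp (2 * Real.pi * Complex.I * (μ i)) =
        Complex.exp (2 * Real.pi * Complex.I * (μ j)) := by
    rcases lt_or_gt_of_ne hne with hlt | hlt
    · exact ⟨a, b, hlt, hab⟩
    · exact ⟨b, a, hlt, hab.symm⟩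
  -- the two eigenvalues agree mod 1
  have h2πI : (2 * (Real.pi:ℂ) * Complex.I) ≠ 0 := by
    simp [Real.pi_ne_zero, Complex.I_ne_zero]
  obtain ⟨n, hn⟩ := Complex.exp_eq_exp_iff_exists_int.mp hexp
  have hzero : (2 * (Real.pi:ℂ) * Complex.I) * (((μ i:ℝ):ℂ) - ((μ j:ℝ):ℂ) - n) = 0 := by
    linear_combination hn
  have hdiff : ((μ (i:ℕ) - μ (j:ℕ) - n : ℝ) : ℂ) = 0 := by
    push_cast
    exact (mul_eq_zero.mp hzero).resolve_left h2πI
  have hreal : μ (i:ℕ) - μ (j:ℕ) = (n:ℝ) := by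
    have := Complex.ofReal_eq_zero.mp hdiff
    linarith [this]
  have hij0 : ((μ (j:ℕ) : ℝ) : AddCircle (1:ℝ)) = ((μ (i:ℕ) : ℝ) : AddCircle (1:ℝ)) := by
    rw [eq_comm, ← sub_eq_zero, ← AddCircle.coe_sub, AddCircle.coe_eq_zero_iff]
    exact ⟨n, by rw [zsmul_eq_mul, mul_one, ← hreal]⟩
  -- set up constants
  set m : ℕ := (j:ℕ) - (i:ℕ) with hm
  have hm1 : 1 ≤ m := by omega
  have hmd : m ≤ d := by omega
  have him : (i:ℕ) + m = (j:ℕ) := by omega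
  have h23 : (2:ℕ)^m < 3^m := Nat.pow_lt_pow_left (by norm_num) (by omega)
  set M : ℕ := 3^m - 2^m with hM
  have hMpos : 0 < M := by omega
  have hMcast : ((M:ℕ):ℝ) = (3:ℝ)^m - 2^m := by
    rw [hM]; push_cast [Nat.cast_sub h23.le]; ring
  set L : ℕ := (Finset.Icc 1 d).lcm (fun j => 3 ^ j - 2 ^ j) with hL
  have hdvd : M ∣ L := Finset.dvd_lcm (by simp [Finset.mem_Icc]; omega)
  have hLpos : 0 < L := by
    rcases Nat.eq_zero_or_pos L with h0 | h0
    · exfalso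
      rw [hL, Finset.lcm_eq_zero_iff] at h0
      obtain ⟨x, hx, hx0⟩ := h0
      simp only [Finset.mem_Icc] at hx
      have hx0' : 3^x - 2^x = 0 := hx0
      have : (2:ℕ)^x < 3^x := Nat.pow_lt_pow_left (by norm_num) (by omega)
      omega
    · exact h0
  -- step A: (3^m - 2^m) μ_i is ε-small
  have hA := chainA μ ε hb (i:ℕ) m
  rw [him] at hA
  have hA' : ‖((((M:ℕ):ℝ) * μ (i:ℕ) : ℝ) : AddCircle (1:ℝ))‖ ≤ ((M:ℕ):ℝ) * ε := by
    have hrw : ((((M:ℕ):ℝ) * μ (i:ℕ) : ℝ) : AddCircle (1:ℝ)) =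
        (((3:ℝ)^m * μ (i:ℕ) - 2^m * μ (j:ℕ) : ℝ) : AddCircle (1:ℝ)) := by
      rw [eq_comm, ← sub_eq_zero, ← AddCircle.coe_sub, AddCircle.coe_eq_zero_iff]
      refine ⟨2^m * n, ?_⟩
      rw [zsmul_eq_mul, mul_one]
      have e : (3:ℝ)^m * μ (i:ℕ) - 2^m * μ (j:ℕ) - ((M:ℕ):ℝ) * μ (i:ℕ)
          = 2^m * (μ (i:ℕ) - μ (j:ℕ)) := by rw [hMcast]; ring
      rw [e, hreal]; push_cast; ring
    rw [hrw, hMcast]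
    exact hA
  -- step B: L μ_i is ε-small
  have hB : ‖(((L:ℝ) * μ (i:ℕ) : ℝ) : AddCircle (1:ℝ))‖ ≤ (L:ℝ) * ε := by
    obtain ⟨q, hq⟩ := hdvd
    have e : ((L:ℝ) * μ (i:ℕ) : ℝ) = ((q:ℕ):ℝ) * (((M:ℕ):ℝ) * μ (i:ℕ)) := by
      rw [hq]; push_cast; ring
    rw [e, coe_mul_nat]
    refine (norm_nsmul_le).trans ?_
    refine (mul_le_mul_of_nonneg_left hA' (by positivity)).trans (le_of_eq ?_)
    rw [hq]; push_cast; ring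
  -- step C: 3^i L μ_0 is small
  have hC := chainC μ ε L hb (i:ℕ) hB (i:ℕ) le_rfl
  rw [Nat.sub_self, hμ0] at hC
  -- step D: N l is small
  have hN : Npaper d = 3^(d-(i:ℕ)) * (3^(i:ℕ) * L) := by
    rw [Npaper, ← hL, ← mul_assoc, ← pow_add]
    congr 2
    omega
  have hD : ‖(((Npaper d : ℝ) * l : ℝ) : AddCircle (1:ℝ))‖ ≤ (Npaper d : ℝ) * ε := by
    have e : ((Npaper d : ℝ) * l : ℝ) = ((3^(d-(i:ℕ)):ℕ):ℝ) * (((3^(i:ℕ)*L:ℕ):ℝ) * l) := by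
      rw [hN]; push_cast; ring
    rw [e, coe_mul_nat]
    refine (norm_nsmul_le).trans ?_
    refine (mul_le_mul_of_nonneg_left hC (by positivity)).trans (le_of_eq ?_)
    rw [hN]; push_cast; ring
  -- conclude
  refine hD.trans_lt ?_
  have hNpos : 0 < Npaper d := by
    rw [Npaper]; positivity
  have h1 : (1:ℝ) < 3^d * d := by
    have : (3:ℝ)^d ≥ 3^1 := pow_le_pow_right₀ (by norm_num) hd1
    have hd' : (1:ℝ) ≤ d := by exact_mod_cast hd1
    nlinarith
  calc (Npaper d : ℝ) * ε = 1 * ((Npaper d : ℝ) * ε) := by ring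
    _ < (3^d * d) * ((Npaper d : ℝ) * ε) := by
        refine mul_lt_mul_of_pos_right h1 ?_
        have : (0:ℝ) < Npaper d := by exact_mod_cast hNpos
        positivity
    _ = 3 ^ d * d * Npaper d * ε := by ring
end

section
/- Let U, V be unitaries on a finite-dimensional Hilbert space with ‖V U³ − U² V‖ < ε, and let P_λ, P_{λ'} be the spectral projections of U onto eigenvalues e^{2πiλ}, e^{2πiλ'}. If the circle distance |3λ − 2λ'| exceeds some δ > 0, then ‖P_{λ'} V P_λ‖ < ε / |e^{2πiδ} − 1| (in particular ‖P_{λ'} V P_λ‖ ≤ ε / |e^{2πi(3λ−2λ')} − 1|). -/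
lemma abs_exp_I_sub_one (θ : ℝ) :
    ‖Complex.exp (θ * Complex.I) - 1‖ = Real.sqrt (2 - 2 * Real.cos θ) := by
  rw [Complex.exp_mul_I, Complex.norm_def, Complex.normSq_apply]
  simp [Complex.cos_ofReal_re, Complex.sin_ofReal_re]
  ring_nf
  congr 1
  nlinarith [Real.sin_sq_add_cos_sq θ]

lemma cos_round_eq (t d : ℝ) (hd : d = |t - round t|) :
    Real.cos (2*Real.pi*t) = Real.cos (2*Real.pi*d) := by
  rw [hd, show 2*Real.pi*|t - round t| = |2*Real.pi*(t - round t)| by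
      rw [abs_mul, abs_of_pos Real.two_pi_pos], Real.cos_abs,
    show 2*Real.pi*(t - round t) = 2*Real.pi*t - (round t : ℝ)*(2*Real.pi) by ring,
    Real.cos_sub_int_mul_two_pi]

section
variable {H : Type*} [NormedAddCommGroup H] [InnerProductSpace ℂ H] [FiniteDimensional ℂ H]

lemma proj_norm_le_one (P : H →L[ℂ] H) (hP : IsIdempotentElem P) (hPsa : IsSelfAdjoint P) :
    ‖P‖ ≤ 1 := by
  have h1 : ‖P‖ * ‖P‖ = ‖P‖ := by
    rw [← CStarRing.norm_star_mul_self, hPsa.star_eq, hP.eq]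
  nlinarith [norm_nonneg P]

lemma comm_right (U P : H →L[ℂ] H) (hU : U ∈ unitary (H →L[ℂ] H)) (c : ℂ)
    (hc : c * (starRingEnd ℂ) c = 1) (hUP : U * P = c • P) (hPsa : IsSelfAdjoint P) :
    P * U = c • P := by
  have h1 : star P * star U = (starRingEnd ℂ) c • star P := by
    rw [← star_mul, hUP, star_smul]; rfl
  rw [hPsa.star_eq] at h1
  have h2 : P * star U * U = ((starRingEnd ℂ) c • P) * U := by rw [h1]
  rw [mul_assoc, (Unitary.mem_iff.mp hU).1, mul_one, smul_mul_assoc] at h2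
  calc P * U = (c * (starRingEnd ℂ) c) • (P * U) := by rw [hc, one_smul]
    _ = c • ((starRingEnd ℂ) c • (P * U)) := by rw [mul_smul]
    _ = c • P := by rw [← h2]
end

theorem stmt17 {H : Type*} [NormedAddCommGroup H] [InnerProductSpace ℂ H]
    [FiniteDimensional ℂ H]
    (U V P P' : H →L[ℂ] H)
    (hU : U ∈ unitary (H →L[ℂ] H)) (hV : V ∈ unitary (H →L[ℂ] H))
    (l l' : ℝ)
    (hP : IsIdempotentElem P) (hPsa : IsSelfAdjoint P)
    (hP' : IsIdempotentElem P') (hP'sa : IsSelfAdjoint P')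
    (hUP : U * P = Complex.exp (2 * Real.pi * Complex.I * l) • P)
    (hUP' : U * P' = Complex.exp (2 * Real.pi * Complex.I * l') • P')
    (ε δ : ℝ) (hδ : 0 < δ)
    (hdist : δ < ‖((3 * l - 2 * l' : ℝ) : AddCircle (1 : ℝ))‖)
    (h : ‖V * U ^ 3 - U ^ 2 * V‖ < ε) :
    ‖P' * V * P‖ < ε / ‖Complex.exp (2 * Real.pi * Complex.I * δ) - 1‖ ∧
    ‖P' * V * P‖ ≤
      ε / ‖Complex.exp (2 * Real.pi * Complex.I * (3 * l - 2 * l')) - 1‖ := by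
  set c : ℂ := Complex.exp (2 * Real.pi * Complex.I * l) with hc_def
  set c' : ℂ := Complex.exp (2 * Real.pi * Complex.I * l') with hc'_def
  have habs : ∀ r : ℝ, ‖Complex.exp (2 * Real.pi * Complex.I * r)‖ = 1 := by
    intro r; rw [Complex.norm_exp]; simp
  have hcc' : c' * (starRingEnd ℂ) c' = 1 := by
    rw [Complex.mul_conj, Complex.normSq_eq_norm_sq, habs]; norm_num
  -- U^3 P = c^3 • P
  have h2 : U ^ 2 * P = c ^ 2 • P := by
    rw [sq, mul_assoc, hUP, mul_smul_comm, hUP, smul_smul, sq]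
  have h3 : U ^ 3 * P = c ^ 3 • P := by
    have : U ^ 3 = U * U ^ 2 := by rw [pow_succ, sq]; noncomm_ring
    rw [this, mul_assoc, h2, mul_smul_comm, hUP, smul_smul, ← pow_succ]
  -- P' U^2 = c'^2 • P'
  have hPU : P' * U = c' • P' := comm_right U P' hU c' hcc' hUP' hP'sa
  have hPU2 : P' * U ^ 2 = c' ^ 2 • P' := by
    rw [sq, ← mul_assoc, hPU, smul_mul_assoc, hPU, smul_smul, sq]
  -- key identity
  have key : P' * (V * U ^ 3 - U ^ 2 * V) * P = (c ^ 3 - c' ^ 2) • (P' * V * P) := by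
    rw [mul_sub, sub_mul, sub_smul]
    congr 1
    · rw [mul_assoc, mul_assoc, mul_assoc, h3, mul_smul_comm, mul_smul_comm]
    · rw [show P' * (U ^ 2 * V) * P = (P' * U ^ 2) * (V * P) by
        rw [mul_assoc, mul_assoc, mul_assoc], hPU2, smul_mul_assoc, mul_assoc]
  -- norm bound
  have hnorm : ‖c ^ 3 - c' ^ 2‖ * ‖P' * V * P‖ ≤ ‖V * U ^ 3 - U ^ 2 * V‖ := by
    have e1 : ‖P' * (V * U ^ 3 - U ^ 2 * V) * P‖
        = ‖c ^ 3 - c' ^ 2‖ * ‖P' * V * P‖ := by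
      rw [key]
      exact norm_smul (c ^ 3 - c' ^ 2) (P' * V * P)
    calc ‖c ^ 3 - c' ^ 2‖ * ‖P' * V * P‖
        = ‖P' * (V * U ^ 3 - U ^ 2 * V) * P‖ := e1.symm
      _ ≤ ‖P' * (V * U ^ 3 - U ^ 2 * V)‖ * ‖P‖ := norm_mul_le _ _
      _ ≤ (‖P'‖ * ‖V * U ^ 3 - U ^ 2 * V‖) * ‖P‖ := by
          gcongr; exact norm_mul_le _ _
      _ ≤ (1 * ‖V * U ^ 3 - U ^ 2 * V‖) * 1 := by
          gcongr <;> [exact proj_norm_le_one P' hP' hP'sa; exact proj_norm_le_one P hP hPsa]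
      _ = ‖V * U ^ 3 - U ^ 2 * V‖ := by ring
  -- factorization of c^3 - c'^2
  have hfac : ‖c ^ 3 - c' ^ 2‖
      = ‖Complex.exp (2 * Real.pi * Complex.I * (3 * (l:ℂ) - 2 * (l':ℂ))) - 1‖ := by
    have e3 : c ^ 3
        = c' ^ 2 * Complex.exp (2 * Real.pi * Complex.I * (3 * (l:ℂ) - 2 * (l':ℂ))) := by
      rw [hc_def, hc'_def, ← Complex.exp_nat_mul, ← Complex.exp_nat_mul, ← Complex.exp_add]
      congr 1
      push_cast
      ring
    rw [show c ^ 3 - c' ^ 2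
        = c' ^ 2 * (Complex.exp (2 * Real.pi * Complex.I * (3 * (l:ℂ) - 2 * (l':ℂ))) - 1) by
      rw [mul_sub, mul_one, ← e3], norm_mul, norm_pow, habs, one_pow, one_mul]
  -- convert abs to sqrt of cosines
  have hAdef : ‖Complex.exp (2 * Real.pi * Complex.I * (3 * (l:ℂ) - 2 * (l':ℂ))) - 1‖
      = Real.sqrt (2 - 2 * Real.cos (2 * Real.pi * (3 * l - 2 * l'))) := by
    rw [show (2 * (Real.pi:ℂ) * Complex.I * (3 * (l:ℂ) - 2 * (l':ℂ)))
        = ((2 * Real.pi * (3 * l - 2 * l') : ℝ) : ℂ) * Complex.I by push_cast; ring, abs_exp_I_sub_one]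
  have hBdef : ‖Complex.exp (2 * Real.pi * Complex.I * δ) - 1‖
      = Real.sqrt (2 - 2 * Real.cos (2 * Real.pi * δ)) := by
    rw [show (2 * (Real.pi:ℂ) * Complex.I * (δ:ℂ))
        = ((2 * Real.pi * δ : ℝ) : ℂ) * Complex.I by push_cast; ring, abs_exp_I_sub_one]
  -- circle norm facts
  set d : ℝ := ‖((3 * l - 2 * l' : ℝ) : AddCircle (1 : ℝ))‖ with hd_def
  have hd_eq : d = |(3 * l - 2 * l') - round (3 * l - 2 * l')| := by
    rw [hd_def, AddCircle.norm_eq]; norm_num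
  have hd_half : d ≤ 1 / 2 := by
    have := AddCircle.norm_le_half_period (1:ℝ) (x := ((3 * l - 2 * l' : ℝ) : AddCircle (1:ℝ)))
      one_ne_zero
    exact this.trans_eq (by norm_num)
  have hδd : δ < d := hdist
  have hcos_t : Real.cos (2 * Real.pi * (3 * l - 2 * l')) = Real.cos (2 * Real.pi * d) := cos_round_eq (3 * l - 2 * l') d hd_eq
  have hpi := Real.pi_pos
  have hcoslt : Real.cos (2 * Real.pi * d) < Real.cos (2 * Real.pi * δ) :=
    Real.cos_lt_cos_of_nonneg_of_le_pi (by positivity) (by nlinarith) (by nlinarith)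
  have hcos1 : Real.cos (2 * Real.pi * δ) < 1 := by
    have := Real.cos_lt_cos_of_nonneg_of_le_pi (le_refl (0:ℝ)) (y := 2 * Real.pi * δ)
      (by nlinarith) (by positivity)
    simpa using this
  have hBpos : (0:ℝ) < Real.sqrt (2 - 2 * Real.cos (2 * Real.pi * δ)) :=
    Real.sqrt_pos.mpr (by linarith)
  have hBA : Real.sqrt (2 - 2 * Real.cos (2 * Real.pi * δ))
      ≤ Real.sqrt (2 - 2 * Real.cos (2 * Real.pi * (3 * l - 2 * l'))) := by
    apply Real.sqrt_le_sqrt; rw [hcos_t]; linarith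
  have hApos : (0:ℝ) < Real.sqrt (2 - 2 * Real.cos (2 * Real.pi * (3 * l - 2 * l'))) := lt_of_lt_of_le hBpos hBA
  have hε : 0 < ε := lt_of_le_of_lt (norm_nonneg _) h
  rw [hfac, hAdef] at hnorm
  have h1 : ‖P' * V * P‖ < ε / Real.sqrt (2 - 2 * Real.cos (2 * Real.pi * (3 * l - 2 * l'))) := by
    rw [lt_div_iff₀ hApos]; nlinarith [norm_nonneg (P' * V * P)]
  constructor
  · rw [hBdef]
    refine lt_of_lt_of_le h1 ?_
    gcongr
  · have : ‖Complex.exp (2 * Real.pi * Complex.I * (3 * (l:ℂ) - 2 * (l':ℂ))) - 1‖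
        = Real.sqrt (2 - 2 * Real.cos (2 * Real.pi * (3 * l - 2 * l'))) := hAdef
    rw [show (2 * (Real.pi:ℂ) * Complex.I * (3 * (l:ℂ) - 2 * (l':ℂ)))
      = 2 * (Real.pi:ℂ) * Complex.I * (3 * (l:ℂ) - 2 * (l':ℂ)) from rfl] at this
    calc ‖P' * V * P‖ ≤ ε / Real.sqrt (2 - 2 * Real.cos (2 * Real.pi * (3 * l - 2 * l'))) := le_of_lt h1
      _ = ε / ‖Complex.exp (2 * Real.pi * Complex.I * (3 * (l:ℂ) - 2 * (l':ℂ))) - 1‖ := by rw [hAdef]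
      _ = ε / ‖Complex.exp (2 * Real.pi * Complex.I * (3 * l - 2 * l')) - 1‖ := by norm_num
end
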